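/- arXiv:2209.01046 — 5 statements merged into one kernel-verified Lean document; each statement's English description precedes it below -/
import Mathlib

section
/- For p, q ∈ [1,∞] with 1/p + 1/q = 1, the logarithmic norm of a real n×n matrix A induced by the L^p norm equals the logarithmic norm of Aᵀ induced by the L^q norm: μ_p(A) = μ_q(Aᵀ). -/
open Matrix Finset
open scoped ENNReal

/-- The strictly increasing enumeration of a `k`-element subset of `Fin n`. -/
noncomputable def emb {n k : ℕ} (s : Finset (Fin n)) (h : s.card = k) : Fin k → Fin n :=
  fun i => ((s.orderIsoOfFin h) i : Fin n)

/-- The `k`-th multiplicative compound: the matrix of all `k × k` minors. -/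
noncomputable def mulCompound {𝕜 : Type*} [CommRing 𝕜] {n m : ℕ} (k : ℕ)
    (A : Matrix (Fin n) (Fin m) 𝕜) :
    Matrix {s : Finset (Fin n) // s.card = k} {t : Finset (Fin m) // t.card = k} 𝕜 :=
  fun α β => (A.submatrix (emb α.1 α.2) (emb β.1 β.2)).det

/-- The `k`-th additive compound: `A^{[k]} = d/dε (I + εA)^{(k)} |_{ε=0}`. -/
noncomputable def addCompound {𝕜 : Type*} [RCLike 𝕜] {n : ℕ} (k : ℕ)
    (A : Matrix (Fin n) (Fin n) 𝕜) :
    Matrix {s : Finset (Fin n) // s.card = k} {s : Finset (Fin n) // s.card = k} 𝕜 :=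
  fun α β => deriv (fun ε : 𝕜 => mulCompound k (1 + ε • A) α β) 0

/-- The signed anti-diagonal matrix `U`, written in the coordinates of
`Q(k,n)` and `Q(n-k,n)`: its entry at `(t, s)` is `s(s) = (-1)^{∑ (i+1)}` when `t = sᶜ`. -/
noncomputable def Umat (𝕜 : Type*) [CommRing 𝕜] (n k : ℕ) :
    Matrix {t : Finset (Fin n) // t.card = n - k} {s : Finset (Fin n) // s.card = k} 𝕜 :=
  fun t s => if t.1 = (s.1)ᶜ then (-1 : 𝕜) ^ (∑ i ∈ s.1, ((i : ℕ) + 1)) else 0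

/-- The operator norm of a real matrix induced by the `L^p` vector norm. -/
noncomputable def pOpNorm {ι : Type*} [Fintype ι] [DecidableEq ι] (p : ℝ≥0∞) (hp : 1 ≤ p)
    (A : Matrix ι ι ℝ) : ℝ :=
  letI : Fact (1 ≤ p) := ⟨hp⟩
  ‖LinearMap.toContinuousLinearMap
      (Matrix.toLin (PiLp.basisFun p ℝ ι) (PiLp.basisFun p ℝ ι) A)‖

/-- The logarithmic norm induced by the `L^p` norm:
`μ_p(A) = lim_{h→0⁺} (‖I + hA‖_p - 1)/h`. -/
noncomputable def logNorm {ι : Type*} [Fintype ι] [DecidableEq ι] (p : ℝ≥0∞) (hp : 1 ≤ p)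
    (A : Matrix ι ι ℝ) : ℝ :=
  Filter.limUnder (nhdsWithin (0 : ℝ) (Set.Ioi 0))
    fun h : ℝ => (pOpNorm p hp (1 + h • A) - 1) / h

set_option linter.unusedSectionVars false

section LogNormAux

variable {ι : Type*} [Fintype ι] [DecidableEq ι]

private lemma toLin_piLp_apply (p : ℝ≥0∞) [Fact (1 ≤ p)] (A : Matrix ι ι ℝ)
    (x : PiLp p (fun _ : ι => ℝ)) (i : ι) :
    (Matrix.toLin (PiLp.basisFun p ℝ ι) (PiLp.basisFun p ℝ ι) A) x i = A.mulVec x i := by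
  set e := WithLp.linearEquiv p ℝ (ι → ℝ) with he
  have key : (Matrix.toLin (PiLp.basisFun p ℝ ι) (PiLp.basisFun p ℝ ι) A) x
      = e.symm (A.mulVec (e x)) := by
    apply e.injective
    rw [Matrix.toLin_apply, LinearEquiv.apply_symm_apply, map_sum]
    simp only [PiLp.basisFun_repr, PiLp.basisFun_apply, _root_.map_smul]
    ext k
    simp [WithLp.linearEquiv, mulVec, dotProduct, Pi.single_apply, Finset.sum_ite_eq', he]
  rw [key]
  rfl

private noncomputable def sgn (r : ℝ) : ℝ := if r < 0 then -1 else 1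

private lemma sgn_mul_self (r : ℝ) : sgn r * r = |r| := by
  unfold sgn
  rcases lt_or_ge r 0 with h | h
  · simp [h, abs_of_neg h]
  · simp [not_lt.2 h, abs_of_nonneg h]

private lemma abs_sgn (r : ℝ) : |sgn r| = 1 := by
  unfold sgn; split <;> simp

private lemma conj_cases {p q : ℝ≥0∞} (hp : 1 ≤ p) (hpq : p⁻¹ + q⁻¹ = 1) :
    (p = 1 ∧ q = ∞) ∨ (p = ∞ ∧ q = 1) ∨
      (p ≠ ∞ ∧ q ≠ ∞ ∧ Real.HolderConjugate p.toReal q.toReal) := by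
  rcases eq_or_ne p 1 with rfl | hp1
  · left
    refine ⟨rfl, ?_⟩
    have h : (1:ℝ≥0∞) + q⁻¹ = 1 + 0 := by simpa using hpq
    have h2 : q⁻¹ = 0 := by rwa [ENNReal.add_right_inj (by simp)] at h
    simpa [ENNReal.inv_eq_zero] using h2
  rcases eq_or_ne p ∞ with rfl | ptop
  · right; left
    refine ⟨rfl, ?_⟩
    have h : q⁻¹ = 1 := by simpa using hpq
    simpa [ENNReal.inv_eq_one] using h
  · right; right
    have hp1' : 1 < p := lt_of_le_of_ne hp (Ne.symm hp1)
    have hq_top : q ≠ ∞ := by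
      rintro rfl
      have h : p⁻¹ = 1 := by simpa using hpq
      exact hp1 (by simpa [ENNReal.inv_eq_one] using h)
    have hp0 : p ≠ 0 := (zero_lt_one.trans hp1').ne'
    have hq0 : q ≠ 0 := by
      rintro rfl
      simp at hpq
    refine ⟨ptop, hq_top, Real.holderConjugate_iff.mpr ⟨?_, ?_⟩⟩
    · have h := (ENNReal.toReal_lt_toReal (by simp) ptop).2 hp1'
      simpa using h
    · have h1 : ((p⁻¹ + q⁻¹ : ℝ≥0∞)).toReal = (1 : ℝ≥0∞).toReal := by rw [hpq]
      rw [ENNReal.toReal_add (by simp [hp0]) (by simp [hq0])] at h1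
      simpa [ENNReal.toReal_inv] using h1

private lemma pairing_le (p q : ℝ≥0∞) [Fact (1 ≤ p)] [Fact (1 ≤ q)]
    (hpq : p⁻¹ + q⁻¹ = 1) (x : PiLp p (fun _ : ι => ℝ)) (y : PiLp q (fun _ : ι => ℝ)) :
    |∑ i, x i * y i| ≤ ‖x‖ * ‖y‖ := by
  have habs : |∑ i, x i * y i| ≤ ∑ i, |x i| * |y i| :=
    (Finset.abs_sum_le_sum_abs _ _).trans (le_of_eq (by simp [abs_mul]))
  rcases conj_cases (Fact.out : 1 ≤ p) hpq with ⟨rfl, rfl⟩ | ⟨rfl, rfl⟩ | ⟨hpt, hqt, hc⟩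
  · -- p = 1, q = ∞
    refine habs.trans ?_
    have hx : ‖x‖ = ∑ i, |x i| := by
      rw [PiLp.norm_eq_sum (by simp)]
      simp [Real.norm_eq_abs]
    have hyb : ∀ i, |y i| ≤ ‖y‖ := by
      intro i
      rw [PiLp.norm_eq_ciSup, ← Real.norm_eq_abs]
      exact le_ciSup (Set.Finite.bddAbove (Set.finite_range fun j => ‖y j‖)) i
    calc ∑ i, |x i| * |y i| ≤ ∑ i, |x i| * ‖y‖ :=
          Finset.sum_le_sum fun i _ => mul_le_mul_of_nonneg_left (hyb i) (abs_nonneg _)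
      _ = ‖x‖ * ‖y‖ := by rw [hx, Finset.sum_mul]
  · -- p = ∞, q = 1
    refine habs.trans ?_
    have hy : ‖y‖ = ∑ i, |y i| := by
      rw [PiLp.norm_eq_sum (by simp)]
      simp [Real.norm_eq_abs]
    have hxb : ∀ i, |x i| ≤ ‖x‖ := by
      intro i
      rw [PiLp.norm_eq_ciSup, ← Real.norm_eq_abs]
      exact le_ciSup (Set.Finite.bddAbove (Set.finite_range fun j => ‖x j‖)) i
    calc ∑ i, |x i| * |y i| ≤ ∑ i, ‖x‖ * |y i| :=
          Finset.sum_le_sum fun i _ => mul_le_mul_of_nonneg_right (hxb i) (abs_nonneg _)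
      _ = ‖x‖ * ‖y‖ := by rw [hy, Finset.mul_sum]
  · -- both finite
    refine habs.trans ?_
    have hx : ‖x‖ = (∑ i, |x i| ^ p.toReal) ^ (1 / p.toReal) := by
      rw [PiLp.norm_eq_sum (ENNReal.toReal_pos (by
        intro h; rw [h] at hc; exact absurd hc.lt (by norm_num)) hpt)]
      simp [Real.norm_eq_abs]
    have hy : ‖y‖ = (∑ i, |y i| ^ q.toReal) ^ (1 / q.toReal) := by
      rw [PiLp.norm_eq_sum (ENNReal.toReal_pos (by
        intro h; rw [h] at hc; exact absurd hc.symm.lt (by norm_num)) hqt)]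
      simp [Real.norm_eq_abs]
    rw [hx, hy]
    have h := Real.inner_le_Lp_mul_Lq (Finset.univ) (fun i => |x i|) (fun i => |y i|) hc
    simpa [abs_abs] using h

private lemma exists_dual (p q : ℝ≥0∞) [Fact (1 ≤ p)] [Fact (1 ≤ q)]
    (hpq : p⁻¹ + q⁻¹ = 1) (z : PiLp q (fun _ : ι => ℝ)) :
    ∃ y : PiLp p (fun _ : ι => ℝ), ‖y‖ ≤ 1 ∧ ∑ i, y i * z i = ‖z‖ := by
  rcases conj_cases (Fact.out : 1 ≤ p) hpq with ⟨rfl, rfl⟩ | ⟨rfl, rfl⟩ | ⟨hpt, hqt, hc⟩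
  · -- p = 1, q = ∞
    cases isEmpty_or_nonempty ι with
    | inl h =>
      refine ⟨0, by simp, ?_⟩
      rw [PiLp.norm_eq_ciSup]
      simp [Real.iSup_of_isEmpty]
    | inr h =>
      obtain ⟨i0, hi0⟩ := Finite.exists_max (fun i => |z i|)
      refine ⟨(WithLp.equiv 1 (ι → ℝ)).symm (Pi.single i0 (sgn (z i0))), ?_, ?_⟩
      · rw [WithLp.equiv_symm_apply, PiLp.norm_toLp_single]
        simp [Real.norm_eq_abs, abs_sgn]
      · have hsum : ∑ i, ((WithLp.equiv 1 (ι → ℝ)).symm (Pi.single i0 (sgn (z i0)))) i * z i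
            = sgn (z i0) * z i0 := by
          rw [Finset.sum_eq_single i0]
          · simp
          · intro b _ hb
            simp [Pi.single_apply, hb]
          · simp
        rw [hsum, sgn_mul_self]
        rw [PiLp.norm_eq_ciSup]
        refine le_antisymm ?_ (ciSup_le fun i => by simpa [Real.norm_eq_abs] using hi0 i)
        rw [show |z i0| = ‖z i0‖ from (Real.norm_eq_abs _).symm]
        exact le_ciSup (Set.Finite.bddAbove (Set.finite_range fun j => ‖z j‖)) i0
  · -- p = ∞, q = 1
    refine ⟨(WithLp.equiv ∞ (ι → ℝ)).symm (fun i => sgn (z i)), ?_, ?_⟩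
    · rw [PiLp.norm_eq_ciSup]
      cases isEmpty_or_nonempty ι with
      | inl h => simp [Real.iSup_of_isEmpty]
      | inr h => exact ciSup_le fun i => by simp [Real.norm_eq_abs, abs_sgn]
    · have hterm : ∀ i, ((WithLp.equiv ∞ (ι → ℝ)).symm (fun i => sgn (z i))) i * z i = |z i| :=
        fun i => sgn_mul_self (z i)
      rw [Finset.sum_congr rfl (fun i _ => hterm i)]
      rw [PiLp.norm_eq_sum (by simp)]
      simp [Real.norm_eq_abs]
  · -- both finite
    set qt := q.toReal with hqt'
    set pt := p.toReal with hpt'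
    have hqt1 : 1 < qt := hc.symm.lt
    have hqt0 : qt ≠ 0 := by positivity
    have hptpos : (0:ℝ) < pt := zero_lt_one.trans hc.lt
    rcases eq_or_ne z 0 with rfl | hz
    · exact ⟨0, by simp, by simp⟩
    have hN : 0 < ‖z‖ := norm_pos_iff.2 hz
    set N := ‖z‖ with hNdef
    have hqtpos : (0:ℝ) < qt := zero_lt_one.trans hqt1
    have hnorm : N = (∑ i, |z i| ^ qt) ^ (1 / qt) := by
      rw [hNdef, PiLp.norm_eq_sum hqtpos]
      simp [Real.norm_eq_abs, hqt']
    have hSnn : 0 ≤ ∑ i, |z i| ^ qt :=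
      Finset.sum_nonneg fun i _ => Real.rpow_nonneg (abs_nonneg _) _
    have hS : ∑ i, |z i| ^ qt = N ^ qt := by
      rw [hnorm, ← Real.rpow_mul hSnn, one_div, inv_mul_cancel₀ hqt0, Real.rpow_one]
    set y : PiLp p (fun _ : ι => ℝ) :=
      (WithLp.equiv p (ι → ℝ)).symm (fun i => sgn (z i) * |z i| ^ (qt - 1) / N ^ (qt - 1))
      with hydef
    have happ : ∀ i, y i = sgn (z i) * |z i| ^ (qt - 1) / N ^ (qt - 1) := fun i => rfl
    have hsplit : ∀ i, |z i| * |z i| ^ (qt - 1) = |z i| ^ qt := by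
      intro i
      nth_rewrite 1 [← Real.rpow_one |z i|]
      rw [← Real.rpow_add' (abs_nonneg _)
        (by rw [show (1:ℝ) + (qt - 1) = qt by ring]; exact hqt0),
        show (1:ℝ) + (qt - 1) = qt by ring]
    have hterm : ∀ i, y i * z i = |z i| ^ qt / N ^ (qt - 1) := by
      intro i
      calc y i * z i = (sgn (z i) * z i) * |z i| ^ (qt - 1) / N ^ (qt - 1) := by
            rw [happ]; ring
        _ = |z i| ^ qt / N ^ (qt - 1) := by rw [sgn_mul_self, hsplit]
    have hsum : ∑ i, y i * z i = N := by
      rw [Finset.sum_congr rfl fun i _ => hterm i, ← Finset.sum_div, hS,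
        ← Real.rpow_sub hN, show qt - (qt - 1) = (1:ℝ) by ring, Real.rpow_one]
    have hnormy : ‖y‖ = 1 := by
      rw [PiLp.norm_eq_sum hptpos]
      have habs : ∀ i, ‖y i‖ ^ pt = |z i| ^ qt / N ^ qt := by
        intro i
        rw [Real.norm_eq_abs, happ, abs_div, abs_mul, abs_sgn, one_mul,
          abs_of_nonneg (Real.rpow_nonneg (abs_nonneg _) _),
          abs_of_nonneg (Real.rpow_nonneg hN.le _),
          Real.div_rpow (Real.rpow_nonneg (abs_nonneg _) _) (Real.rpow_nonneg hN.le _),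
          ← Real.rpow_mul (abs_nonneg _), ← Real.rpow_mul hN.le,
          hc.symm.sub_one_mul_conj]
      rw [Finset.sum_congr rfl fun i _ => habs i, ← Finset.sum_div, hS,
        div_self (by positivity : (N:ℝ) ^ qt ≠ 0), Real.one_rpow]
    exact ⟨y, le_of_eq hnormy, hsum⟩

private lemma pOpNorm_transpose_le (p q : ℝ≥0∞) (hp : 1 ≤ p) (hq : 1 ≤ q)
    (hpq : p⁻¹ + q⁻¹ = 1) (A : Matrix ι ι ℝ) :
    pOpNorm q hq Aᵀ ≤ pOpNorm p hp A := by
  haveI : Fact (1 ≤ p) := ⟨hp⟩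
  haveI : Fact (1 ≤ q) := ⟨hq⟩
  have hC : 0 ≤ pOpNorm p hp A := by unfold pOpNorm; exact norm_nonneg _
  show ‖LinearMap.toContinuousLinearMap
      (Matrix.toLin (PiLp.basisFun q ℝ ι) (PiLp.basisFun q ℝ ι) Aᵀ)‖ ≤ pOpNorm p hp A
  refine ContinuousLinearMap.opNorm_le_bound _ hC ?_
  intro x
  simp only [LinearMap.coe_toContinuousLinearMap']
  set z := (Matrix.toLin (PiLp.basisFun q ℝ ι) (PiLp.basisFun q ℝ ι) Aᵀ) x with hzdef
  obtain ⟨y, hy1, hy2⟩ := exists_dual p q hpq z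
  set w := (Matrix.toLin (PiLp.basisFun p ℝ ι) (PiLp.basisFun p ℝ ι) A) y with hwdef
  have hswap : ∑ i, y i * z i = ∑ j, x j * w j := by
    have h1 : ∀ i, z i = ∑ j, A j i * x j := by
      intro i
      rw [hzdef, toLin_piLp_apply]
      simp [mulVec, dotProduct, Matrix.transpose_apply]
    have h2 : ∀ j, w j = ∑ i, A j i * y i := by
      intro j
      rw [hwdef, toLin_piLp_apply]
      simp [mulVec, dotProduct]
    simp only [h1, h2, Finset.mul_sum, Finset.sum_mul]
    rw [Finset.sum_comm]
    exact Finset.sum_congr rfl fun j _ => Finset.sum_congr rfl fun i _ => by ring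
  have hb : |∑ j, x j * w j| ≤ ‖x‖ * ‖w‖ :=
    pairing_le q p (by rw [add_comm]; exact hpq) x w
  have hw : ‖w‖ ≤ pOpNorm p hp A * ‖y‖ := by
    have h := ContinuousLinearMap.le_opNorm (LinearMap.toContinuousLinearMap
      (Matrix.toLin (PiLp.basisFun p ℝ ι) (PiLp.basisFun p ℝ ι) A)) y
    unfold pOpNorm
    simpa using h
  calc ‖z‖ = ∑ i, y i * z i := hy2.symm
    _ ≤ |∑ j, x j * w j| := by rw [hswap]; exact le_abs_self _
    _ ≤ ‖x‖ * ‖w‖ := hb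
    _ ≤ ‖x‖ * (pOpNorm p hp A * ‖y‖) :=
        mul_le_mul_of_nonneg_left hw (norm_nonneg x)
    _ ≤ ‖x‖ * (pOpNorm p hp A * 1) := by
        refine mul_le_mul_of_nonneg_left ?_ (norm_nonneg x)
        exact mul_le_mul_of_nonneg_left hy1 hC
    _ = pOpNorm p hp A * ‖x‖ := by ring

private lemma pOpNorm_transpose (p q : ℝ≥0∞) (hp : 1 ≤ p) (hq : 1 ≤ q)
    (hpq : p⁻¹ + q⁻¹ = 1) (A : Matrix ι ι ℝ) :
    pOpNorm p hp A = pOpNorm q hq Aᵀ := by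
  refine le_antisymm ?_ (pOpNorm_transpose_le p q hp hq hpq A)
  have h := pOpNorm_transpose_le q p hq hp (by rw [add_comm]; exact hpq) Aᵀ
  rwa [Matrix.transpose_transpose] at h

end LogNormAux

/-- For Hölder conjugate `p, q ∈ [1,∞]`, the log norm of a real matrix induced by
the `L^p` norm equals the log norm of its transpose induced by the `L^q` norm. -/
theorem logNorm_transpose_dual {n : ℕ} (p q : ℝ≥0∞) (hp : 1 ≤ p) (hq : 1 ≤ q)
    (hpq : 1 / p + 1 / q = 1) (A : Matrix (Fin n) (Fin n) ℝ) :
    logNorm p hp A = logNorm q hq Aᵀ := by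
  unfold logNorm
  congr 1
  funext h
  rw [pOpNorm_transpose p q hp hq (by simpa [one_div] using hpq) (1 + h • A),
    Matrix.transpose_add, Matrix.transpose_smul, Matrix.transpose_one]
end

section
/- Sylvester–Franke identity: for A ∈ ℂ^{n×n} and k ∈ {1,…,n}, det(A^{(k)}) = (det A)^{binom(n−1,k−1)}. -/
open Matrix Finset
open scoped ENNReal

namespace SF
open Equiv
variable {R : Type*} [CommRing R] {n m k : ℕ}

lemma emb_eq (s : Finset (Fin n)) (h : s.card = k) : emb s h = fun i => s.orderEmbOfFin h i := by
  funext i; exact s.coe_orderIsoOfFin_apply h i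

lemma emb_injective (s : Finset (Fin n)) (h : s.card = k) : Function.Injective (emb s h) := by
  rw [emb_eq]; exact (s.orderEmbOfFin h).injective

lemma emb_mem (s : Finset (Fin n)) (h : s.card = k) (i : Fin k) : emb s h i ∈ s := by
  rw [emb_eq]; exact s.orderEmbOfFin_mem h i

lemma image_emb (s : Finset (Fin n)) (h : s.card = k) :
    Finset.univ.image (emb s h) = s := by
  ext x
  simp only [Finset.mem_image, Finset.mem_univ, true_and]
  constructor
  · rintro ⟨i, rfl⟩; exact emb_mem s h i
  · intro hx
    have : x ∈ Set.range (s.orderEmbOfFin h) := by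
      rw [s.range_orderEmbOfFin h]; exact hx
    obtain ⟨i, hi⟩ := this
    exact ⟨i, by rw [emb_eq]; exact hi⟩

lemma image_emb_comp (s : Finset (Fin n)) (h : s.card = k) (τ : Perm (Fin k)) :
    Finset.univ.image (emb s h ∘ τ) = s := by
  classical
  have h2 : Finset.image (emb s h ∘ τ) univ = Finset.image (emb s h) univ := by
    ext x
    simp only [Finset.mem_image, Finset.mem_univ, true_and, Function.comp_apply]
    exact ⟨fun ⟨i, hi⟩ => ⟨τ i, hi⟩, fun ⟨i, hi⟩ => ⟨τ.symm i, by simpa using hi⟩⟩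
  rw [h2, image_emb]

lemma sum_injective_eq {F : (Fin k → Fin m) → R} :
    (∑ p : Fin k → Fin m with Function.Injective p, F p)
      = ∑ x : {s : Finset (Fin m) // s.card = k} × Perm (Fin k),
          F (emb x.1.1 x.1.2 ∘ x.2) := by
  classical
  refine (Finset.sum_bij (fun (x : {s : Finset (Fin m) // s.card = k} × Perm (Fin k)) _ =>
    emb x.1.1 x.1.2 ∘ x.2) ?_ ?_ ?_ (fun _ _ => rfl)).symm
  · intro x _
    simp only [mem_filter, mem_univ, true_and]
    exact (emb_injective x.1.1 x.1.2).comp x.2.injective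
  · rintro ⟨s, τ⟩ _ ⟨t, ρ⟩ _ hco0
    have hco : emb s.1 s.2 ∘ τ = emb t.1 t.2 ∘ ρ := hco0
    have hst : s = t := by
      apply Subtype.ext
      rw [← image_emb_comp s.1 s.2 τ, ← image_emb_comp t.1 t.2 ρ, hco]
    subst hst
    have hτρ : τ = ρ := by
      apply Equiv.ext
      intro i
      exact emb_injective s.1 s.2 (congrFun hco i)
    rw [hτρ]

  · intro p hp
    have hpinj : Function.Injective p := by simpa using (mem_filter.1 hp).2
    set s : Finset (Fin m) := Finset.univ.image p with hsdef
    have hs : s.card = k := by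
      rw [hsdef, Finset.card_image_of_injective _ hpinj, card_univ, Fintype.card_fin]
    have hmem : ∀ i, p i ∈ s := fun i => by simp [hsdef]
    set g : Fin k → Fin k := fun i => (s.orderIsoOfFin hs).symm ⟨p i, hmem i⟩ with hgdef
    have hginj : Function.Injective g := by
      intro i j hij
      apply hpinj
      have := congrArg (fun z => (((s.orderIsoOfFin hs) z : {x // x ∈ s}) : Fin m)) hij
      simpa [hgdef] using this
    refine ⟨(⟨s, hs⟩, Equiv.ofBijective g ((Finite.injective_iff_bijective).1 hginj)),
      mem_univ _, ?_⟩
    funext i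
    show emb s hs (g i) = p i
    simp [emb, hgdef]


lemma det_mul_aux' {P : Matrix (Fin k) (Fin m) R} {Q : Matrix (Fin m) (Fin k) R}
    {p : Fin k → Fin m} (H : ¬ Function.Injective p) :
    (∑ σ : Perm (Fin k), ((Equiv.Perm.sign σ : ℤ) : R) * ∏ x, P (σ x) (p x) * Q (p x) x) = 0 := by
  obtain ⟨i, j, hpij, hij⟩ : ∃ i j, p i = p j ∧ i ≠ j := by
    rw [Function.Injective] at H
    push_neg at H
    obtain ⟨i, j, h1, h2⟩ := H
    exact ⟨i, j, h1, h2⟩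
  exact
    sum_involution (fun σ _ => σ * Equiv.swap i j)
      (fun σ _ => by
        have : (∏ x, P (σ x) (p x)) = ∏ x, P ((σ * Equiv.swap i j) x) (p x) :=
          Fintype.prod_equiv (Equiv.swap i j) _ _ (by simp [Equiv.apply_swap_eq_self hpij])
        simp [this, Equiv.Perm.sign_swap hij, prod_mul_distrib])
      (fun σ _ _ => (not_congr Equiv.mul_swap_eq_iff).mpr hij) (fun _ _ => mem_univ _) fun σ _ =>
      Equiv.mul_swap_involutive i j σ

lemma sum_perm_eq (M N : Matrix (Fin k) (Fin k) R) :
    ∑ τ : Perm (Fin k), ∑ σ : Perm (Fin k), ((Equiv.Perm.sign σ : ℤ) : R) * ∏ i, M (σ i) (τ i) * N (τ i) i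
      = det M * det N := by
  have h1 : det (M * N)
      = ∑ p : Fin k → Fin k, ∑ σ : Perm (Fin k), ((Equiv.Perm.sign σ : ℤ) : R) * ∏ i, M (σ i) (p i) * N (p i) i := by
    simp only [det_apply', mul_apply, prod_univ_sum, mul_sum, Fintype.piFinset_univ]
    rw [Finset.sum_comm]
  classical
  have h2 : (∑ p : Fin k → Fin k, ∑ σ : Perm (Fin k), ((Equiv.Perm.sign σ : ℤ) : R) * ∏ i, M (σ i) (p i) * N (p i) i)
      = ∑ p : Fin k → Fin k with Function.Bijective p,
          ∑ σ : Perm (Fin k), ((Equiv.Perm.sign σ : ℤ) : R) * ∏ i, M (σ i) (p i) * N (p i) i := by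
    refine (sum_subset (filter_subset _ _) fun f _ hbij ↦ Matrix.det_mul_aux ?_).symm
    simpa only [true_and, mem_filter, mem_univ] using hbij
  have h3 : (∑ p : Fin k → Fin k with Function.Bijective p,
        ∑ σ : Perm (Fin k), ((Equiv.Perm.sign σ : ℤ) : R) * ∏ i, M (σ i) (p i) * N (p i) i)
      = ∑ τ : Perm (Fin k), ∑ σ : Perm (Fin k), ((Equiv.Perm.sign σ : ℤ) : R) * ∏ i, M (σ i) (τ i) * N (τ i) i :=
    sum_bij (fun p h ↦ Equiv.ofBijective p (mem_filter.1 h).2) (fun _ _ ↦ mem_univ _)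
      (fun _ _ _ _ h ↦ by injection h)
      (fun b _ ↦ ⟨b, mem_filter.2 ⟨mem_univ _, b.bijective⟩, coe_fn_injective rfl⟩) fun _ _ ↦ rfl
  rw [← h3, ← h2, ← h1, det_mul]

theorem cauchy_binet (P : Matrix (Fin k) (Fin m) R) (Q : Matrix (Fin m) (Fin k) R) :
    det (P * Q) = ∑ s : {s : Finset (Fin m) // s.card = k},
      det (P.submatrix id (emb s.1 s.2)) * det (Q.submatrix (emb s.1 s.2) id) := by
  classical
  have h1 : det (P * Q)
      = ∑ p : Fin k → Fin m, ∑ σ : Perm (Fin k), ((Equiv.Perm.sign σ : ℤ) : R) * ∏ i, P (σ i) (p i) * Q (p i) i := by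
    simp only [det_apply', mul_apply, prod_univ_sum, mul_sum, Fintype.piFinset_univ]
    rw [Finset.sum_comm]
  rw [h1]
  rw [show (∑ p : Fin k → Fin m, ∑ σ : Perm (Fin k), ((Equiv.Perm.sign σ : ℤ) : R) * ∏ i, P (σ i) (p i) * Q (p i) i)
      = ∑ p : Fin k → Fin m with Function.Injective p,
          ∑ σ : Perm (Fin k), ((Equiv.Perm.sign σ : ℤ) : R) * ∏ i, P (σ i) (p i) * Q (p i) i from
    (sum_subset (filter_subset _ _) fun f _ hinj ↦ det_mul_aux' (by simpa using hinj)).symm]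
  rw [sum_injective_eq (F := fun p => ∑ σ : Perm (Fin k), ((Equiv.Perm.sign σ : ℤ) : R) * ∏ i, P (σ i) (p i) * Q (p i) i)]
  rw [Fintype.sum_prod_type]
  refine Finset.sum_congr rfl fun s _ => ?_
  exact sum_perm_eq (P.submatrix id (emb s.1 s.2)) (Q.submatrix (emb s.1 s.2) id)

lemma emb_surj (s : Finset (Fin n)) (h : s.card = k) {x : Fin n} (hx : x ∈ s) :
    ∃ i, emb s h i = x := by
  have h2 := image_emb s h
  rw [← h2] at hx
  simpa using hx

lemma mulCompound_mul {p : ℕ} (A : Matrix (Fin n) (Fin m) R) (B : Matrix (Fin m) (Fin p) R) :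
    mulCompound k (A * B) = mulCompound k A * mulCompound k B := by
  ext s t
  rw [Matrix.mul_apply]
  show det ((A * B).submatrix (emb s.1 s.2) (emb t.1 t.2)) = _
  have h0 : (A * B).submatrix (emb s.1 s.2) (emb t.1 t.2)
      = (A.submatrix (emb s.1 s.2) id) * (B.submatrix id (emb t.1 t.2)) := by
    ext i j
    simp [Matrix.mul_apply]
  rw [h0, cauchy_binet]
  refine Finset.sum_congr rfl fun u _ => ?_
  rw [Matrix.submatrix_submatrix, Matrix.submatrix_submatrix]
  simp [mulCompound, Function.comp_def]

lemma mulCompound_diagonal (d : Fin n → R) :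
    mulCompound k (diagonal d)
      = diagonal (fun s : {s : Finset (Fin n) // s.card = k} => ∏ i ∈ s.1, d i) := by
  classical
  ext s t
  by_cases hst : s = t
  · subst hst
    show det ((diagonal d).submatrix (emb s.1 s.2) (emb s.1 s.2)) = _
    rw [Matrix.submatrix_diagonal _ _ (emb_injective s.1 s.2), det_diagonal,
      Matrix.diagonal_apply_eq]
    have himg : ∏ i ∈ Finset.univ.image (emb s.1 s.2), d i = ∏ i ∈ s.1, d i := by
      rw [image_emb]
    rw [← himg, Finset.prod_image (fun i _ j _ hij => emb_injective s.1 s.2 hij)]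
    rfl
  · rw [Matrix.diagonal_apply_ne _ hst]
    have hne : ¬ t.1 ⊆ s.1 := by
      intro hsub
      exact hst (Subtype.ext (Finset.eq_of_subset_of_card_le hsub (by rw [s.2, t.2])).symm)
    obtain ⟨x, hxt, hxs⟩ := Finset.not_subset.1 hne
    obtain ⟨j0, hj0⟩ := emb_surj t.1 t.2 hxt
    apply Matrix.det_eq_zero_of_column_eq_zero j0
    intro i
    show diagonal d (emb s.1 s.2 i) (emb t.1 t.2 j0) = 0
    apply Matrix.diagonal_apply_ne
    rw [hj0]
    intro hcontra
    exact hxs (hcontra ▸ emb_mem s.1 s.2 i)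

lemma mulCompound_one : mulCompound k (1 : Matrix (Fin n) (Fin n) R) = 1 := by
  rw [← Matrix.diagonal_one, mulCompound_diagonal]
  simp

lemma mulCompound_map {S : Type*} [CommRing S] (φ : R →+* S) (A : Matrix (Fin n) (Fin m) R) :
    mulCompound k (A.map φ) = (mulCompound k A).map φ := by
  ext s t
  show det _ = φ (det _)
  rw [RingHom.map_det, Matrix.submatrix_map]
  rfl

lemma card_filter_mem (hk1 : 1 ≤ k) (i : Fin n) :
    (Finset.univ.filter fun s : {s : Finset (Fin n) // s.card = k} => i ∈ s.1).card
      = (n - 1).choose (k - 1) := by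
  classical
  have hcard : ((Finset.univ : Finset (Fin n)).erase i).card = n - 1 := by
    rw [Finset.card_erase_of_mem (Finset.mem_univ i), Finset.card_univ, Fintype.card_fin]
  rw [← hcard, ← Finset.card_powersetCard]
  apply Finset.card_bij (fun s _ => s.1.erase i)
  · rintro s hs
    rw [Finset.mem_filter] at hs
    rw [Finset.mem_powersetCard]
    exact ⟨Finset.erase_subset_erase i (Finset.subset_univ _),
      by rw [Finset.card_erase_of_mem hs.2, s.2]⟩
  · rintro s hs t ht h
    rw [Finset.mem_filter] at hs ht
    apply Subtype.ext
    rw [← Finset.insert_erase hs.2, ← Finset.insert_erase ht.2, h]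
  · rintro u hu
    rw [Finset.mem_powersetCard] at hu
    have hiu : i ∉ u := fun hmem => (Finset.notMem_erase i _) (hu.1 hmem)
    refine ⟨⟨insert i u, ?_⟩, ?_, ?_⟩
    · rw [Finset.card_insert_of_notMem hiu, hu.2]
      omega
    · simp [Finset.mem_filter]
    · exact Finset.erase_insert hiu

lemma det_mulCompound_diagonal (hk1 : 1 ≤ k) (d : Fin n → R) :
    det (mulCompound k (diagonal d)) = (∏ i, d i) ^ ((n - 1).choose (k - 1)) := by
  classical
  rw [mulCompound_diagonal, det_diagonal]
  calc (∏ s : {s : Finset (Fin n) // s.card = k}, ∏ i ∈ s.1, d i)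
      = ∏ s : {s : Finset (Fin n) // s.card = k}, ∏ i : Fin n,
          (if i ∈ s.1 then d i else 1) := by
        refine Finset.prod_congr rfl fun s _ => ?_
        rw [← Finset.prod_filter, Finset.filter_mem_eq_inter, Finset.univ_inter]
    _ = ∏ i : Fin n, ∏ s : {s : Finset (Fin n) // s.card = k},
          (if i ∈ s.1 then d i else 1) := Finset.prod_comm
    _ = ∏ i : Fin n, d i ^ ((n - 1).choose (k - 1)) := by
        refine Finset.prod_congr rfl fun i _ => ?_
        rw [← Finset.prod_filter, Finset.prod_const, card_filter_mem hk1 i]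
    _ = (∏ i, d i) ^ ((n - 1).choose (k - 1)) := by rw [Finset.prod_pow]

lemma det_mulCompound_transvection (a b : Fin n) (hab : a ≠ b) (c : ℂ) :
    det (mulCompound k (Matrix.transvection a b c)) = 1 := by
  classical
  set T : Matrix (Fin n) (Fin n) (Polynomial ℂ) :=
    Matrix.transvection a b Polynomial.X with hT
  set T' : Matrix (Fin n) (Fin n) (Polynomial ℂ) :=
    Matrix.transvection a b (-Polynomial.X) with hT'
  have hTT' : T * T' = 1 := by
    have hzero : Matrix.single a b (Polynomial.X : Polynomial ℂ) *
        Matrix.single a b (-Polynomial.X) = 0 :=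
      Matrix.single_mul_single_of_ne (h := hab.symm) ..
    rw [hT, hT', Matrix.transvection, Matrix.transvection, add_mul, one_mul, mul_add, mul_one,
      hzero, add_zero, add_assoc, ← Matrix.single_add, neg_add_cancel]
    simp
  have key : det (mulCompound k T) * det (mulCompound k T') = 1 := by
    rw [← det_mul, ← mulCompound_mul, hTT', mulCompound_one, det_one]
  have hdeg : (det (mulCompound k T)).natDegree = 0 :=
    Polynomial.natDegree_eq_zero_of_isUnit (IsUnit.of_mul_eq_one _ key)
  have hC := Polynomial.eq_C_of_natDegree_eq_zero hdeg
  have heval : ∀ x : ℂ, det (mulCompound k (Matrix.transvection a b x))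
      = Polynomial.eval x (det (mulCompound k T)) := by
    intro x
    have hmap : T.map (Polynomial.evalRingHom x) = Matrix.transvection a b x := by
      rw [hT, Matrix.transvection, Matrix.transvection,
        Matrix.map_add _ (fun p q => map_add (Polynomial.evalRingHom x) p q),
        Matrix.map_one _ (map_zero _) (map_one _)]
      congr 1
      ext i j
      rw [Matrix.map_apply]
      simp only [Matrix.single, Matrix.of_apply, apply_ite, map_zero,
        Polynomial.coe_evalRingHom, Polynomial.eval_X]
      split <;> simp
    rw [← hmap, mulCompound_map]
    exact (((Polynomial.evalRingHom x)).map_det _).symm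
  have h0 : Polynomial.eval 0 (det (mulCompound k T)) = 1 := by
    rw [← heval 0, Matrix.transvection_zero, mulCompound_one, det_one]
  rw [hC, Polynomial.eval_C] at h0
  rw [heval c, hC, Polynomial.eval_C]
  exact h0

lemma det_mulCompound_list (L : List (Matrix.TransvectionStruct (Fin n) ℂ)) :
    det (mulCompound k (L.map Matrix.TransvectionStruct.toMatrix).prod) = 1 := by
  induction L with
  | nil => rw [List.map_nil, List.prod_nil, mulCompound_one, det_one]
  | cons t L ih =>
    rw [List.map_cons, List.prod_cons, mulCompound_mul, det_mul, ih, mul_one]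
    obtain ⟨i, j, hij, c⟩ := t
    rw [Matrix.TransvectionStruct.toMatrix_mk]
    exact det_mulCompound_transvection i j hij c

end SF

/-- Sylvester–Franke: `det (A^{(k)}) = (det A)^{binom(n-1, k-1)}`. -/
theorem sylvester_franke {n k : ℕ} (hk1 : 1 ≤ k) (hkn : k ≤ n)
    (A : Matrix (Fin n) (Fin n) ℂ) :
    (mulCompound k A).det = A.det ^ ((n - 1).choose (k - 1)) := by
  classical
  obtain ⟨L, L', D, hM⟩ := Matrix.Pivot.exists_list_transvec_mul_diagonal_mul_list_transvec A
  rw [hM, SF.mulCompound_mul, SF.mulCompound_mul, det_mul, det_mul, det_mul, det_mul,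
    SF.det_mulCompound_list, SF.det_mulCompound_list, SF.det_mulCompound_diagonal hk1,
    Matrix.TransvectionStruct.det_toMatrix_prod, Matrix.TransvectionStruct.det_toMatrix_prod, det_diagonal]
  ring
end

section
/- Duality of multiplicative compounds: for A ∈ ℂ^{n×n}, k ∈ {1,…,n−1}, r = binom(n,k), and U the r×r anti-diagonal signed matrix with u_{ij} = s(α^j) if i+j = r+1 and 0 otherwise (where α^1,…,α^r are the lexicographically ordered elements of Q(k,n) and s(α) = (−1)^{α_1+⋯+α_k}), it holds that (A^{(k)})ᵀ Uᵀ A^{(n−k)} U = det(A) · I_r. -/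
open Matrix Finset
open scoped ENNReal

namespace CompoundAux

open Equiv

variable {n k : ℕ}

lemma card_compl_eq {s : Finset (Fin n)} (h : s.card = k) : sᶜ.card = n - k := by
  simp [Finset.card_compl, h]

lemma emb_eq_orderEmbOfFin (s : Finset (Fin n)) (h : s.card = k) (i : Fin k) :
    emb s h i = s.orderEmbOfFin h i := rfl

lemma emb_mem (s : Finset (Fin n)) (h : s.card = k) (i : Fin k) : emb s h i ∈ s :=
  s.orderEmbOfFin_mem h i

lemma emb_strictMono (s : Finset (Fin n)) (h : s.card = k) : StrictMono (emb s h) :=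
  (s.orderEmbOfFin h).strictMono

lemma emb_injective (s : Finset (Fin n)) (h : s.card = k) : Function.Injective (emb s h) :=
  (emb_strictMono s h).injective

lemma emb_symm (s : Finset (Fin n)) (h : s.card = k) (z : {x // x ∈ s}) :
    emb s h ((s.orderIsoOfFin h).symm z) = z := by
  simp [emb]

lemma emb_surj (s : Finset (Fin n)) (h : s.card = k) {x : Fin n} (hx : x ∈ s) :
    ∃ i, emb s h i = x :=
  ⟨(s.orderIsoOfFin h).symm ⟨x, hx⟩, emb_symm s h ⟨x, hx⟩⟩

lemma emb_congr {s t : Finset (Fin n)} (hst : s = t) (hs : s.card = k) (ht : t.card = k)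
    (i : Fin k) : emb s hs i = emb t ht i := by subst hst; rfl

/-- The equivalence `Fin k ⊕ Fin (n-k) ≃ Fin n` induced by a `k`-element subset `s`. -/
noncomputable def Eqv (s : Finset (Fin n)) (h : s.card = k) : (Fin k ⊕ Fin (n - k)) ≃ Fin n :=
  (Equiv.sumCongr (s.orderIsoOfFin h).toEquiv
      ((sᶜ.orderIsoOfFin (card_compl_eq h)).toEquiv.trans
        (Equiv.subtypeEquivRight (fun _ => Finset.mem_compl)))).trans
    (Equiv.sumCompl (· ∈ s))

lemma Eqv_inl (s : Finset (Fin n)) (h : s.card = k) (i : Fin k) :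
    Eqv s h (Sum.inl i) = emb s h i := by
  simp [Eqv, emb]

lemma Eqv_inr (s : Finset (Fin n)) (h : s.card = k) (j : Fin (n - k)) :
    Eqv s h (Sum.inr j) = emb sᶜ (card_compl_eq h) j := by
  simp [Eqv, emb]

/-- The permutation of `Fin n` mapping `s` to `t` using `π` and `sᶜ` to `tᶜ` using `ρ`. -/
noncomputable def Phi (s t : Finset (Fin n)) (hs : s.card = k) (ht : t.card = k)
    (π : Perm (Fin k)) (ρ : Perm (Fin (n - k))) : Perm (Fin n) :=
  (Eqv s hs).symm.trans ((Equiv.sumCongr π ρ).trans (Eqv t ht))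

lemma Phi_emb (s t : Finset (Fin n)) (hs : s.card = k) (ht : t.card = k)
    (π : Perm (Fin k)) (ρ : Perm (Fin (n - k))) (i : Fin k) :
    Phi s t hs ht π ρ (emb s hs i) = emb t ht (π i) := by
  rw [← Eqv_inl s hs i, ← Eqv_inl t ht (π i)]
  simp [Phi]

lemma Phi_embc (s t : Finset (Fin n)) (hs : s.card = k) (ht : t.card = k)
    (π : Perm (Fin k)) (ρ : Perm (Fin (n - k))) (j : Fin (n - k)) :
    Phi s t hs ht π ρ (emb sᶜ (card_compl_eq hs) j) = emb tᶜ (card_compl_eq ht) (ρ j) := by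
  rw [← Eqv_inr s hs j, ← Eqv_inr t ht (ρ j)]
  simp [Phi]

lemma Phi_mul (s t : Finset (Fin n)) (hs : s.card = k) (ht : t.card = k)
    (π : Perm (Fin k)) (ρ : Perm (Fin (n - k))) :
    Phi s t hs ht π ρ = Phi s t hs ht 1 1 * Phi s s hs hs π ρ := by
  ext x
  simp [Phi, Perm.mul_apply]

lemma sign_Phi_same (s : Finset (Fin n)) (hs : s.card = k)
    (π : Perm (Fin k)) (ρ : Perm (Fin (n - k))) :
    Perm.sign (Phi s s hs hs π ρ) = Perm.sign π * Perm.sign ρ := by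
  have : Phi s s hs hs π ρ = (Eqv s hs).permCongr (Equiv.sumCongr π ρ) := by
    ext x; simp [Phi, Equiv.permCongr]
  rw [this, Perm.sign_permCongr, Perm.sign_sumCongr]

lemma Phi_inv (s t : Finset (Fin n)) (hs : s.card = k) (ht : t.card = k) :
    (Phi s t hs ht 1 1)⁻¹ = Phi t s ht hs 1 1 := by
  ext x
  simp [Phi, Perm.inv_def, Perm.one_def, Equiv.sumCongr_refl]

end CompoundAux
namespace CompoundAux
open Equiv
variable {n k : ℕ}

/-- the predecessor of `a` in `Fin n` (junk at 0). -/
def predF {n : ℕ} (a : Fin n) : Fin n := ⟨a.val - 1, lt_of_le_of_lt (Nat.sub_le _ _) a.isLt⟩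

lemma card_step {s : Finset (Fin n)} {a b : Fin n} (ha : a ∈ s) (hb : b ∉ s) :
    (insert b (s.erase a)).card = s.card := by
  rw [Finset.card_insert_of_notMem (fun h => hb (Finset.mem_of_mem_erase h)),
    Finset.card_erase_of_mem ha]
  have := Finset.card_ne_zero_of_mem ha
  omega

lemma compl_step {s : Finset (Fin n)} {a b : Fin n} (ha : a ∈ s) (hb : b ∉ s) :
    (insert b (s.erase a))ᶜ = insert a (sᶜ.erase b) := by
  have hab : a ≠ b := fun h => hb (h ▸ ha)
  ext x
  by_cases hxa : x = a <;> by_cases hxb : x = b <;>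
    simp_all [Finset.mem_insert, Finset.mem_erase, Finset.mem_compl]

lemma sum_step {s : Finset (Fin n)} {a b : Fin n} (ha : a ∈ s) (hb : b ∉ s)
    (hba : (b : ℕ) + 1 = a) :
    (∑ i ∈ insert b (s.erase a), (i : ℕ)) + 1 = ∑ i ∈ s, (i : ℕ) := by
  rw [Finset.sum_insert (fun h => hb (Finset.mem_of_mem_erase h))]
  have h2 : (a : ℕ) + ∑ i ∈ s.erase a, (i : ℕ) = ∑ i ∈ s, (i : ℕ) :=
    Finset.add_sum_erase _ _ ha
  omega

/-- replacing `a ∈ s` by its predecessor `b = a - 1 ∉ s` changes `emb` by a swap. -/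
lemma emb_step_down {s : Finset (Fin n)} (hs : s.card = k) {a b : Fin n}
    (ha : a ∈ s) (hb : b ∉ s) (hba : (b : ℕ) + 1 = a)
    (hs' : (insert b (s.erase a)).card = k) (i : Fin k) :
    emb (insert b (s.erase a)) hs' i = Equiv.swap b a (emb s hs i) := by
  have hab : b ≠ a := fun h => hb (h ▸ ha)
  have key : ∀ j, Equiv.swap b a (emb s hs j) = if emb s hs j = a then b else emb s hs j := by
    intro j
    by_cases h : emb s hs j = a
    · rw [h, Equiv.swap_apply_right]; simp [h]
    · rw [Equiv.swap_apply_of_ne_of_ne (fun hc => hb (by rw [← hc]; exact emb_mem s hs j)) h, if_neg h]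
  have hmono : StrictMono (fun j => Equiv.swap b a (emb s hs j)) := by
    intro i' j' hij
    have hm := emb_strictMono s hs hij
    simp only []
    rw [key, key]
    by_cases h1 : emb s hs i' = a <;> by_cases h2 : emb s hs j' = a
    · exact absurd (emb_injective s hs (h1.trans h2.symm)) (ne_of_lt hij)
    · -- f i' = b, f j' = emb j' with emb j' > a
      simp only [if_pos h1, if_neg h2]
      have : (a : ℕ) < emb s hs j' := by rw [← h1]; exact hm
      exact Fin.lt_def.mpr (by omega)
    · -- f j' = b; emb i' < a, emb i' ≠ b
      simp only [if_neg h1, if_pos h2]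
      have h3 : (emb s hs i' : ℕ) < a := by rw [← h2]; exact hm
      have h4 : emb s hs i' ≠ b := fun hc => hb (by rw [← hc]; exact emb_mem s hs i')
      have h5 : (emb s hs i' : ℕ) ≠ b := fun hc => h4 (Fin.ext hc)
      exact Fin.lt_def.mpr (by omega)
    · simpa only [if_neg h1, if_neg h2] using hm
  have hmem : ∀ j, Equiv.swap b a (emb s hs j) ∈ insert b (s.erase a) := by
    intro j
    rw [key]
    by_cases h : emb s hs j = a
    · simp [h]
    · exact if_neg h ▸ Finset.mem_insert_of_mem (Finset.mem_erase.mpr ⟨h, emb_mem s hs j⟩)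
  have := Finset.orderEmbOfFin_unique hs' hmem hmono
  rw [emb_eq_orderEmbOfFin, ← this]

/-- replacing `b ∈ s` by its successor `a = b + 1 ∉ s` changes `emb` by a swap. -/
lemma emb_step_up {s : Finset (Fin n)} (hs : s.card = k) {a b : Fin n}
    (hb : b ∈ s) (ha : a ∉ s) (hba : (b : ℕ) + 1 = a)
    (hs' : (insert a (s.erase b)).card = k) (i : Fin k) :
    emb (insert a (s.erase b)) hs' i = Equiv.swap b a (emb s hs i) := by
  have hab : b ≠ a := fun h => ha (h ▸ hb)
  have key : ∀ j, Equiv.swap b a (emb s hs j) = if emb s hs j = b then a else emb s hs j := by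
    intro j
    by_cases h : emb s hs j = b
    · rw [h, Equiv.swap_apply_left]; simp [h]
    · rw [Equiv.swap_apply_of_ne_of_ne h (fun hc => ha (by rw [← hc]; exact emb_mem s hs j)), if_neg h]
  have hmono : StrictMono (fun j => Equiv.swap b a (emb s hs j)) := by
    intro i' j' hij
    have hm := emb_strictMono s hs hij
    simp only []
    rw [key, key]
    by_cases h1 : emb s hs i' = b <;> by_cases h2 : emb s hs j' = b
    · exact absurd (emb_injective s hs (h1.trans h2.symm)) (ne_of_lt hij)
    · -- f i' = a, f j' = emb j' with emb j' > b, emb j' ≠ a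
      simp only [if_pos h1, if_neg h2]
      have h3 : (b : ℕ) < emb s hs j' := by rw [← h1]; exact hm
      have h4 : emb s hs j' ≠ a := fun hc => ha (by rw [← hc]; exact emb_mem s hs j')
      have h5 : (emb s hs j' : ℕ) ≠ a := fun hc => h4 (Fin.ext hc)
      exact Fin.lt_def.mpr (by omega)
    · -- f j' = a; emb i' < b
      simp only [if_neg h1, if_pos h2]
      have h3 : (emb s hs i' : ℕ) < b := by rw [← h2]; exact hm
      exact Fin.lt_def.mpr (by omega)
    · simpa only [if_neg h1, if_neg h2] using hm
  have hmem : ∀ j, Equiv.swap b a (emb s hs j) ∈ insert a (s.erase b) := by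
    intro j
    rw [key]
    by_cases h : emb s hs j = b
    · simp [h]
    · exact if_neg h ▸ Finset.mem_insert_of_mem (Finset.mem_erase.mpr ⟨h, emb_mem s hs j⟩)
  have := Finset.orderEmbOfFin_unique hs' hmem hmono
  rw [emb_eq_orderEmbOfFin, ← this]

end CompoundAux
namespace CompoundAux
open Equiv
variable {n k : ℕ}

lemma Eqv_step {s : Finset (Fin n)} (hs : s.card = k) {a b : Fin n}
    (ha : a ∈ s) (hb : b ∉ s) (hba : (b : ℕ) + 1 = a)
    (hs' : (insert b (s.erase a)).card = k) (y : Fin k ⊕ Fin (n - k)) :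
    Eqv (insert b (s.erase a)) hs' y = Equiv.swap b a (Eqv s hs y) := by
  cases y with
  | inl i => rw [Eqv_inl, Eqv_inl, emb_step_down hs ha hb hba hs' i]
  | inr j =>
    rw [Eqv_inr, Eqv_inr,
      emb_congr (compl_step ha hb) (card_compl_eq hs')
        ((card_step (Finset.mem_compl.mpr hb) (by simp [ha])).trans (card_compl_eq hs)) j]
    exact emb_step_up (card_compl_eq hs) (Finset.mem_compl.mpr hb)
      (by simp [ha]) hba _ j

lemma Phi_step {t s : Finset (Fin n)} (ht : t.card = k) (hs : s.card = k) {a b : Fin n}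
    (ha : a ∈ s) (hb : b ∉ s) (hba : (b : ℕ) + 1 = a)
    (hs' : (insert b (s.erase a)).card = k) :
    Phi t (insert b (s.erase a)) ht hs' 1 1 = Equiv.swap b a * Phi t s ht hs 1 1 := by
  ext x
  rw [Perm.mul_apply]
  simp only [Phi, Equiv.trans_apply]
  rw [Eqv_step hs ha hb hba hs']

lemma sign_Phi_step {t s : Finset (Fin n)} (ht : t.card = k) (hs : s.card = k) {a b : Fin n}
    (ha : a ∈ s) (hb : b ∉ s) (hba : (b : ℕ) + 1 = a)
    (hs' : (insert b (s.erase a)).card = k) :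
    Perm.sign (Phi t s ht hs 1 1) = - Perm.sign (Phi t (insert b (s.erase a)) ht hs' 1 1) := by
  rw [Phi_step ht hs ha hb hba hs', _root_.map_mul,
    Perm.sign_swap (fun h => hb (by rw [h]; exact ha))]
  simp

/-- a set with no "descent" is downward closed. -/
lemma mem_of_le_of_no_descent {s : Finset (Fin n)}
    (h : ∀ a ∈ s, (a : ℕ) ≠ 0 → predF a ∈ s) :
    ∀ a ∈ s, ∀ b : Fin n, b ≤ a → b ∈ s := by
  have key : ∀ d : ℕ, ∀ a ∈ s, ∀ b : Fin n, b ≤ a → (a : ℕ) - b = d → b ∈ s := by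
    intro d
    induction d with
    | zero =>
      intro a ha b hb hd
      have : b = a := Fin.ext (by have := Fin.le_def.mp hb; omega)
      exact this ▸ ha
    | succ d IH =>
      intro a ha b hb hd
      have hb' : (b : ℕ) < a := by have := Fin.le_def.mp hb; omega
      have h0 : (a : ℕ) ≠ 0 := by omega
      have hpa : predF a ∈ s := h a ha h0
      exact IH (predF a) hpa b (Fin.le_def.mpr (by simp [predF]; omega))
        (by simp [predF]; omega)
  exact fun a ha b hb => key ((a : ℕ) - b) a ha b hb rfl

lemma mem_iff_lt_of_dc {s : Finset (Fin n)} (hs : s.card = k)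
    (hdc : ∀ a ∈ s, ∀ b : Fin n, b ≤ a → b ∈ s) (x : Fin n) :
    x ∈ s ↔ (x : ℕ) < k := by
  constructor
  · intro hx
    have hsub : Finset.Iic x ⊆ s := fun b hb => hdc x hx b (Finset.mem_Iic.mp hb)
    have := Finset.card_le_card hsub
    rw [Fin.card_Iic, hs] at this
    omega
  · intro hx
    by_contra hxs
    have hsub : s ⊆ Finset.Iio x := by
      intro a ha
      rw [Finset.mem_Iio]
      by_contra hax
      exact hxs (hdc a ha x (le_of_not_gt hax))
    have := Finset.card_le_card hsub
    rw [Fin.card_Iio, hs] at this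
    omega

lemma dc_unique {s t : Finset (Fin n)} (hs : s.card = k) (ht : t.card = k)
    (hsd : ∀ a ∈ s, ∀ b : Fin n, b ≤ a → b ∈ s)
    (htd : ∀ a ∈ t, ∀ b : Fin n, b ≤ a → b ∈ t) : s = t := by
  ext x
  rw [mem_iff_lt_of_dc hs hsd, mem_iff_lt_of_dc ht htd]

lemma Phi_self (s : Finset (Fin n)) (hs : s.card = k) : Phi s s hs hs 1 1 = 1 := by
  ext x
  simp [Phi, Perm.one_def, Equiv.sumCongr_refl]

lemma sign_Phi_one :
    ∀ (N : ℕ) (s t : Finset (Fin n)) (hs : s.card = k) (ht : t.card = k),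
      (∑ i ∈ s, (i : ℕ)) + (∑ i ∈ t, (i : ℕ)) = N →
      Perm.sign (Phi s t hs ht 1 1) = (-1 : ℤˣ) ^ N := by
  intro N
  induction N using Nat.strong_induction_on with
  | _ N IH =>
    intro s t hs ht hN
    by_cases hdt : ∃ a ∈ t, (a : ℕ) ≠ 0 ∧ predF a ∉ t
    · obtain ⟨a, ha, h0, hp⟩ := hdt
      have hba : ((predF a : Fin n) : ℕ) + 1 = a := by simp [predF]; omega
      have ht' : (insert (predF a) (t.erase a)).card = k := (card_step ha hp).trans ht
      have hsum := sum_step ha hp hba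
      have hM : (∑ i ∈ s, (i : ℕ)) + (∑ i ∈ insert (predF a) (t.erase a), (i : ℕ)) + 1 = N := by
        omega
      rw [sign_Phi_step hs ht ha hp hba ht',
        IH (N - 1) (by omega) s _ hs ht' (by omega)]
      have : N = (N - 1) + 1 := by omega
      rw [this, pow_succ]
      simp
    · by_cases hds : ∃ a ∈ s, (a : ℕ) ≠ 0 ∧ predF a ∉ s
      · obtain ⟨a, ha, h0, hp⟩ := hds
        have hba : ((predF a : Fin n) : ℕ) + 1 = a := by simp [predF]; omega
        have hs' : (insert (predF a) (s.erase a)).card = k := (card_step ha hp).trans hs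
        have hflip : Perm.sign (Phi s t hs ht 1 1) = Perm.sign (Phi t s ht hs 1 1) := by
          rw [← Phi_inv t s ht hs, map_inv]
          simp
        rw [hflip, sign_Phi_step ht hs ha hp hba hs']
        have hflip2 : Perm.sign (Phi t (insert (predF a) (s.erase a)) ht hs' 1 1)
            = Perm.sign (Phi (insert (predF a) (s.erase a)) t hs' ht 1 1) := by
          rw [← Phi_inv _ t hs' ht, map_inv]
          simp
        have hsum := sum_step ha hp hba
        rw [hflip2, IH (N - 1) (by omega) _ t hs' ht (by omega)]
        have : N = (N - 1) + 1 := by omega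
        rw [this, pow_succ]
        simp
      · push_neg at hdt hds
        have hst : s = t :=
          dc_unique hs ht (mem_of_le_of_no_descent hds) (mem_of_le_of_no_descent hdt)
        subst hst
        rw [Phi_self, _root_.map_one]
        have : N = 2 * (∑ i ∈ s, (i : ℕ)) := by omega
        rw [this]
        exact (Even.neg_one_pow ⟨_, (two_mul _)⟩).symm

end CompoundAux
namespace CompoundAux
open Equiv
variable {n k : ℕ}

lemma sign_Phi (s t : Finset (Fin n)) (hs : s.card = k) (ht : t.card = k)
    (π : Perm (Fin k)) (ρ : Perm (Fin (n - k))) :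
    Perm.sign (Phi s t hs ht π ρ)
      = Perm.sign π * Perm.sign ρ
        * (-1 : ℤˣ) ^ ((∑ i ∈ s, (i : ℕ)) + (∑ i ∈ t, (i : ℕ))) := by
  rw [Phi_mul, _root_.map_mul, sign_Phi_same,
    sign_Phi_one _ s t hs ht rfl]
  ring_nf
  rw [mul_comm]

lemma image_Phi (s t : Finset (Fin n)) (hs : s.card = k) (ht : t.card = k)
    (π : Perm (Fin k)) (ρ : Perm (Fin (n - k))) :
    s.image (Phi s t hs ht π ρ) = t := by
  apply Finset.eq_of_subset_of_card_le
  · intro x hx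
    obtain ⟨y, hy, rfl⟩ := Finset.mem_image.mp hx
    obtain ⟨i, rfl⟩ := emb_surj s hs hy
    rw [Phi_emb]
    exact emb_mem t ht _
  · rw [Finset.card_image_of_injective _ (Phi s t hs ht π ρ).injective, hs, ht]

/-- the decomposition map. -/
noncomputable def Ft (s : Finset (Fin n)) (hs : s.card = k) :
    ((γ : {γ : Finset (Fin n) // γ.card = k}) × (Perm (Fin k) × Perm (Fin (n - k))))
      → Perm (Fin n) :=
  fun x => Phi s x.1.1 hs x.1.2 x.2.1 x.2.2

lemma Ft_bijective (s : Finset (Fin n)) (hs : s.card = k) :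
    Function.Bijective (Ft s hs) := by
  constructor
  · rintro ⟨⟨γ, hγ⟩, π, ρ⟩ ⟨⟨γ', hγ'⟩, π', ρ'⟩ h
    simp only [Ft] at h
    have hγγ' : γ = γ' := by
      rw [← image_Phi s γ hs hγ π ρ, h, image_Phi]
    subst hγγ'
    have hπ : π = π' := by
      refine Equiv.ext fun i => ?_
      have := DFunLike.congr_fun h (emb s hs i)
      rw [Phi_emb, Phi_emb] at this
      exact emb_injective γ hγ this
    have hρ : ρ = ρ' := by
      refine Equiv.ext fun j => ?_
      have := DFunLike.congr_fun h (emb sᶜ (card_compl_eq hs) j)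
      rw [Phi_embc, Phi_embc] at this
      exact emb_injective γᶜ (card_compl_eq hγ) this
    subst hπ; subst hρ; rfl
  · intro σ
    set γ : Finset (Fin n) := s.image σ with hγdef
    have hγ : γ.card = k := by rw [hγdef, Finset.card_image_of_injective _ σ.injective, hs]
    have hmem1 : ∀ i : Fin k, σ (emb s hs i) ∈ γ :=
      fun i => Finset.mem_image_of_mem σ (emb_mem s hs i)
    have hmem2 : ∀ j : Fin (n - k), σ (emb sᶜ (card_compl_eq hs) j) ∈ γᶜ := by
      intro j
      rw [Finset.mem_compl]
      intro hc
      obtain ⟨y, hy, hxy⟩ := Finset.mem_image.mp hc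
      have : y = emb sᶜ (card_compl_eq hs) j := σ.injective hxy
      subst this
      exact Finset.mem_compl.mp (emb_mem sᶜ (card_compl_eq hs) j) hy
    set fπ : Fin k → Fin k :=
      fun i => (γ.orderIsoOfFin hγ).symm ⟨σ (emb s hs i), hmem1 i⟩ with hfπ
    have hπinj : Function.Injective fπ := by
      intro i j hij
      rw [hfπ] at hij
      have := congrArg (fun z => ((γ.orderIsoOfFin hγ) z : Fin n)) hij
      simp only [OrderIso.apply_symm_apply] at this
      exact emb_injective s hs (σ.injective this)
    set fρ : Fin (n - k) → Fin (n - k) :=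
      fun j => (γᶜ.orderIsoOfFin (card_compl_eq hγ)).symm
        ⟨σ (emb sᶜ (card_compl_eq hs) j), hmem2 j⟩ with hfρ
    have hρinj : Function.Injective fρ := by
      intro i j hij
      rw [hfρ] at hij
      have := congrArg (fun z => ((γᶜ.orderIsoOfFin (card_compl_eq hγ)) z : Fin n)) hij
      simp only [OrderIso.apply_symm_apply] at this
      exact emb_injective sᶜ (card_compl_eq hs) (σ.injective this)
    refine ⟨⟨⟨γ, hγ⟩, Equiv.ofBijective fπ (Finite.injective_iff_bijective.mp hπinj),
      Equiv.ofBijective fρ (Finite.injective_iff_bijective.mp hρinj)⟩, ?_⟩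
    refine Equiv.ext fun x => ?_
    obtain ⟨y, rfl⟩ := (Eqv s hs).surjective x
    cases y with
    | inl i =>
      rw [Eqv_inl]
      show Phi s γ hs hγ _ _ (emb s hs i) = _
      rw [Phi_emb]
      show emb γ hγ (fπ i) = _
      rw [hfπ, emb_symm]
    | inr j =>
      rw [Eqv_inr]
      show Phi s γ hs hγ _ _ (emb sᶜ (card_compl_eq hs) j) = _
      rw [Phi_embc]
      show emb γᶜ (card_compl_eq hγ) (fρ j) = _
      rw [hfρ, emb_symm]

end CompoundAux
namespace CompoundAux
open Equiv
variable {n k : ℕ}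

lemma inner_sum {R : Type*} [CommRing R] (M : Matrix (Fin n) (Fin n) R)
    (β γ : Finset (Fin n)) (hβ : β.card = k) (hγ : γ.card = k) :
    ∑ π : Perm (Fin k), ∑ ρ : Perm (Fin (n - k)),
        ((Perm.sign (Phi β γ hβ hγ π ρ) : ℤ) : R) * ∏ x, M (Phi β γ hβ hγ π ρ x) x
      = (-1 : R) ^ ((∑ i ∈ β, (i : ℕ)) + (∑ i ∈ γ, (i : ℕ))) *
          ((M.submatrix (emb γ hγ) (emb β hβ)).det *
            (M.submatrix (emb γᶜ (card_compl_eq hγ)) (emb βᶜ (card_compl_eq hβ))).det) := by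
  have step : ∀ (π : Perm (Fin k)) (ρ : Perm (Fin (n - k))),
      ((Perm.sign (Phi β γ hβ hγ π ρ) : ℤ) : R) * ∏ x, M (Phi β γ hβ hγ π ρ x) x
        = (-1 : R) ^ ((∑ i ∈ β, (i : ℕ)) + (∑ i ∈ γ, (i : ℕ))) *
            ((((Perm.sign π : ℤ) : R) * ∏ i, M.submatrix (emb γ hγ) (emb β hβ) (π i) i) *
             (((Perm.sign ρ : ℤ) : R) *
               ∏ j, M.submatrix (emb γᶜ (card_compl_eq hγ)) (emb βᶜ (card_compl_eq hβ)) (ρ j) j)) := by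
    intro π ρ
    have hsign : ((Perm.sign (Phi β γ hβ hγ π ρ) : ℤ) : R)
        = ((Perm.sign π : ℤ) : R) * ((Perm.sign ρ : ℤ) : R)
            * (-1 : R) ^ ((∑ i ∈ β, (i : ℕ)) + (∑ i ∈ γ, (i : ℕ))) := by
      rw [sign_Phi]
      push_cast
      ring
    have hprod : (∏ x, M (Phi β γ hβ hγ π ρ x) x)
        = (∏ i, M.submatrix (emb γ hγ) (emb β hβ) (π i) i) *
          (∏ j, M.submatrix (emb γᶜ (card_compl_eq hγ)) (emb βᶜ (card_compl_eq hβ)) (ρ j) j) := by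
      rw [← Equiv.prod_comp (Eqv β hβ) (fun x => M (Phi β γ hβ hγ π ρ x) x),
        Fintype.prod_sum_type]
      congr 1
      · exact Finset.prod_congr rfl fun i _ => by
          simp only [Eqv_inl, Phi_emb, Matrix.submatrix_apply]
      · exact Finset.prod_congr rfl fun j _ => by
          simp only [Eqv_inr, Phi_embc, Matrix.submatrix_apply]
    rw [hsign, hprod]
    ring
  calc ∑ π : Perm (Fin k), ∑ ρ : Perm (Fin (n - k)),
        ((Perm.sign (Phi β γ hβ hγ π ρ) : ℤ) : R) * ∏ x, M (Phi β γ hβ hγ π ρ x) x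
      = (-1 : R) ^ ((∑ i ∈ β, (i : ℕ)) + (∑ i ∈ γ, (i : ℕ))) *
          ((∑ π : Perm (Fin k),
              ((Perm.sign π : ℤ) : R) * ∏ i, M.submatrix (emb γ hγ) (emb β hβ) (π i) i) *
           (∑ ρ : Perm (Fin (n - k)),
              ((Perm.sign ρ : ℤ) : R) *
                ∏ j, M.submatrix (emb γᶜ (card_compl_eq hγ)) (emb βᶜ (card_compl_eq hβ)) (ρ j) j)) := by
        rw [Finset.sum_mul_sum, Finset.mul_sum]
        refine Finset.sum_congr rfl fun π _ => ?_
        rw [Finset.mul_sum]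
        exact Finset.sum_congr rfl fun ρ _ => step π ρ
    _ = _ := by rw [← Matrix.det_apply', ← Matrix.det_apply']

/-- Generalized Laplace expansion along the columns indexed by `β`. -/
lemma laplace {R : Type*} [CommRing R] (M : Matrix (Fin n) (Fin n) R)
    (β : Finset (Fin n)) (hβ : β.card = k) :
    M.det = ∑ γ : {γ : Finset (Fin n) // γ.card = k},
      (-1 : R) ^ ((∑ i ∈ β, (i : ℕ)) + (∑ i ∈ γ.1, (i : ℕ))) *
        ((M.submatrix (emb γ.1 γ.2) (emb β hβ)).det *
          (M.submatrix (emb γ.1ᶜ (card_compl_eq γ.2)) (emb βᶜ (card_compl_eq hβ))).det) := by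
  rw [Matrix.det_apply']
  rw [← Fintype.sum_bijective (Ft β hβ) (Ft_bijective β hβ)
    (fun x => ((Perm.sign (Ft β hβ x) : ℤ) : R) * ∏ i, M (Ft β hβ x i) i) _ (fun x => rfl)]
  rw [← Finset.univ_sigma_univ, Finset.sum_sigma]
  refine Finset.sum_congr rfl fun γ _ => ?_
  rw [Fintype.sum_prod_type]
  exact inner_sum M β γ.1 hβ γ.2

end CompoundAux

namespace CompoundAux
variable {n k : ℕ}

lemma card_compl_eq' (hkn : k ≤ n) {s : Finset (Fin n)} (h : s.card = n - k) :
    sᶜ.card = k := by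
  simp [Finset.card_compl, h]
  omega

lemma entry (hkn : k ≤ n) (A : Matrix (Fin n) (Fin n) ℂ)
    (α β : {s : Finset (Fin n) // s.card = k}) :
    ((mulCompound k A)ᵀ * (Umat ℂ n k)ᵀ * mulCompound (n - k) A * Umat ℂ n k) α β
      = ∑ γ : {s : Finset (Fin n) // s.card = k},
          ((-1 : ℂ) ^ (∑ i ∈ γ.1, ((i : ℕ) + 1)) * (-1 : ℂ) ^ (∑ i ∈ β.1, ((i : ℕ) + 1)))
            * (mulCompound k A γ α
               * mulCompound (n - k) A ⟨γ.1ᶜ, card_compl_eq γ.2⟩ ⟨β.1ᶜ, card_compl_eq β.2⟩) := by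
  set K' := {t : Finset (Fin n) // t.card = n - k}
  set u₀ : K' := ⟨β.1ᶜ, card_compl_eq β.2⟩ with hu₀
  have collapseU : ∀ f : K' → ℂ,
      (∑ u : K', f u * Umat ℂ n k u β)
        = f u₀ * (-1 : ℂ) ^ (∑ i ∈ β.1, ((i : ℕ) + 1)) := by
    intro f
    rw [Finset.sum_eq_single u₀]
    · rw [hu₀]; simp [Umat]
    · intro u _ hu
      have : ¬ (u.1 = β.1ᶜ) := fun h => hu (Subtype.ext h)
      simp [Umat, this]
    · intro h; exact absurd (Finset.mem_univ u₀) h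
  have swap1 : ∀ t : K', ((mulCompound k A)ᵀ * (Umat ℂ n k)ᵀ) α t
      = ∑ γ : {s : Finset (Fin n) // s.card = k},
          mulCompound k A γ α * Umat ℂ n k t γ := by
    intro t
    rw [Matrix.mul_apply]
    exact Finset.sum_congr rfl fun γ _ => by
      rw [Matrix.transpose_apply, Matrix.transpose_apply]
  have main : ((mulCompound k A)ᵀ * (Umat ℂ n k)ᵀ * mulCompound (n - k) A) α u₀
      = ∑ γ : {s : Finset (Fin n) // s.card = k},
          (-1 : ℂ) ^ (∑ i ∈ γ.1, ((i : ℕ) + 1))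
            * (mulCompound k A γ α
               * mulCompound (n - k) A ⟨γ.1ᶜ, card_compl_eq γ.2⟩ u₀) := by
    rw [Matrix.mul_apply]
    calc ∑ t : K', ((mulCompound k A)ᵀ * (Umat ℂ n k)ᵀ) α t * mulCompound (n - k) A t u₀
        = ∑ t : K', ∑ γ : {s : Finset (Fin n) // s.card = k},
            (mulCompound k A γ α * Umat ℂ n k t γ) * mulCompound (n - k) A t u₀ := by
          refine Finset.sum_congr rfl fun t _ => ?_
          rw [swap1, Finset.sum_mul]
      _ = ∑ γ : {s : Finset (Fin n) // s.card = k}, ∑ t : K',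
            (mulCompound k A γ α * mulCompound (n - k) A t u₀) * Umat ℂ n k t γ := by
          rw [Finset.sum_comm]
          exact Finset.sum_congr rfl fun γ _ => Finset.sum_congr rfl fun t _ => by ring
      _ = _ := by
          refine Finset.sum_congr rfl fun γ _ => ?_
          have hU : ∀ t : K', Umat ℂ n k t γ
              = if t = ⟨γ.1ᶜ, card_compl_eq γ.2⟩ then
                  (-1 : ℂ) ^ (∑ i ∈ γ.1, ((i : ℕ) + 1)) else 0 := by
            intro t
            rw [Umat]
            congr 1
            exact propext ⟨fun h => Subtype.ext h, fun h => congrArg Subtype.val h⟩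
          simp only [hU, mul_ite, mul_zero]
          rw [Finset.sum_ite_eq' Finset.univ]
          simp only [Finset.mem_univ, if_pos]
          ring
  rw [Matrix.mul_apply, collapseU, main, Finset.sum_mul]
  exact Finset.sum_congr rfl fun γ _ => by ring


noncomputable def colmap (α β : {s : Finset (Fin n) // s.card = k}) : Fin n → Fin n :=
  fun x => if hx : x ∈ β.1 then emb α.1 α.2 ((β.1.orderIsoOfFin β.2).symm ⟨x, hx⟩) else x

lemma colmap_emb (α β : {s : Finset (Fin n) // s.card = k}) (j : Fin k) :
    colmap α β (emb β.1 β.2 j) = emb α.1 α.2 j := by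
  rw [colmap, dif_pos (emb_mem β.1 β.2 j)]
  congr 1
  have h1 : (⟨emb β.1 β.2 j, emb_mem β.1 β.2 j⟩ : {x // x ∈ β.1})
      = β.1.orderIsoOfFin β.2 j := Subtype.ext rfl
  rw [h1, OrderIso.symm_apply_apply]

lemma colmap_notmem (α β : {s : Finset (Fin n) // s.card = k}) {x : Fin n} (hx : x ∉ β.1) :
    colmap α β x = x := dif_neg hx

lemma key (hkn : k ≤ n) (A : Matrix (Fin n) (Fin n) ℂ)
    (α β : {s : Finset (Fin n) // s.card = k}) :
    ((mulCompound k A)ᵀ * (Umat ℂ n k)ᵀ * mulCompound (n - k) A * Umat ℂ n k) α β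
      = (A.submatrix id (colmap α β)).det := by
  rw [entry hkn A α β, laplace (A.submatrix id (colmap α β)) β.1 β.2]
  refine Finset.sum_congr rfl fun γ _ => ?_
  have hsub1 : (A.submatrix id (colmap α β)).submatrix (emb γ.1 γ.2) (emb β.1 β.2)
      = A.submatrix (emb γ.1 γ.2) (emb α.1 α.2) := by
    ext i j
    simp [Matrix.submatrix_apply, colmap_emb]
  have hsub2 : (A.submatrix id (colmap α β)).submatrix (emb γ.1ᶜ (card_compl_eq γ.2))
        (emb β.1ᶜ (card_compl_eq β.2))
      = A.submatrix (emb γ.1ᶜ (card_compl_eq γ.2)) (emb β.1ᶜ (card_compl_eq β.2)) := by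
    ext i j
    simp only [Matrix.submatrix_apply, id_eq]
    rw [colmap_notmem α β (Finset.mem_compl.mp (emb_mem _ _ j))]
  rw [hsub1, hsub2]
  show ((-1 : ℂ) ^ (∑ i ∈ γ.1, ((i : ℕ) + 1)) * (-1 : ℂ) ^ (∑ i ∈ β.1, ((i : ℕ) + 1)))
      * ((A.submatrix (emb γ.1 γ.2) (emb α.1 α.2)).det
         * (A.submatrix (emb γ.1ᶜ (card_compl_eq γ.2)) (emb β.1ᶜ (card_compl_eq β.2))).det) = _
  congr 1
  have e1 : ∑ i ∈ γ.1, ((i : ℕ) + 1) = (∑ i ∈ γ.1, (i : ℕ)) + k := by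
    rw [Finset.sum_add_distrib, Finset.sum_const, γ.2, smul_eq_mul, mul_one]
  have e2 : ∑ i ∈ β.1, ((i : ℕ) + 1) = (∑ i ∈ β.1, (i : ℕ)) + k := by
    rw [Finset.sum_add_distrib, Finset.sum_const, β.2, smul_eq_mul, mul_one]
  rw [e1, e2, ← pow_add]
  have e3 : ((∑ i ∈ γ.1, (i : ℕ)) + k) + ((∑ i ∈ β.1, (i : ℕ)) + k)
      = ((∑ i ∈ β.1, (i : ℕ)) + (∑ i ∈ γ.1, (i : ℕ))) + 2 * k := by ring
  rw [e3, pow_add, pow_mul]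
  norm_num

end CompoundAux

/-- duality of multiplicative compounds:
`(A^{(k)})ᵀ Uᵀ A^{(n-k)} U = det(A) · I`. -/
theorem mulCompound_duality {n k : ℕ} (hk1 : 1 ≤ k) (hk : k ≤ n - 1)
    (A : Matrix (Fin n) (Fin n) ℂ) :
    (mulCompound k A)ᵀ * (Umat ℂ n k)ᵀ * mulCompound (n - k) A * Umat ℂ n k
      = A.det • (1 : Matrix {s : Finset (Fin n) // s.card = k}
          {s : Finset (Fin n) // s.card = k} ℂ) := by
  have hkn : k ≤ n := by omega
  ext α β
  rw [CompoundAux.key hkn A α β, Matrix.smul_apply, Matrix.one_apply, smul_eq_mul]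
  by_cases hab : α = β
  · subst hab
    have hcol : CompoundAux.colmap α α = id := by
      funext x
      by_cases hx : x ∈ α.1
      · rw [CompoundAux.colmap]
        simp only [dif_pos hx]
        exact CompoundAux.emb_symm α.1 α.2 ⟨x, hx⟩
      · exact CompoundAux.colmap_notmem α α hx
    rw [hcol, Matrix.submatrix_id_id, if_pos rfl, mul_one]
  · have hne : α.1 ≠ β.1 := fun h => hab (Subtype.ext h)
    have hnsub : ¬ α.1 ⊆ β.1 := fun hsub =>
      hne (Finset.eq_of_subset_of_card_le hsub (by rw [α.2, β.2]))
    obtain ⟨x, hxα, hxβ⟩ := Finset.not_subset.mp hnsub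
    obtain ⟨i, rfl⟩ := CompoundAux.emb_surj α.1 α.2 hxα
    have hne2 : emb β.1 β.2 i ≠ emb α.1 α.2 i :=
      fun h => hxβ (h ▸ CompoundAux.emb_mem β.1 β.2 i)
    have hcols : ∀ a, (A.submatrix id (CompoundAux.colmap α β)) a (emb β.1 β.2 i)
        = (A.submatrix id (CompoundAux.colmap α β)) a (emb α.1 α.2 i) := by
      intro a
      simp only [Matrix.submatrix_apply, id_eq]
      rw [CompoundAux.colmap_emb, CompoundAux.colmap_notmem α β hxβ]
    rw [Matrix.det_zero_of_column_eq hne2 hcols, if_neg hab, mul_zero]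
end

section
/- Duality of additive compounds: for A ∈ ℂ^{n×n}, k ∈ {1,…,n−1}, r = binom(n,k), and U the signed anti-diagonal matrix with u_{ij} = s(α^j) when i+j = r+1 and 0 otherwise, it holds that (A^{[k]})ᵀ + Uᵀ A^{[n−k]} U = tr(A) · I_r. -/
open Matrix Finset
open scoped ENNReal

lemma det_updateRow_one {m : ℕ} (p : Fin m) (v : Fin m → ℂ) :
    ((1 : Matrix (Fin m) (Fin m) ℂ).updateRow p v).det = v p := by
  have hv : v = ∑ j : Fin m, v j • (1 : Matrix (Fin m) (Fin m) ℂ) j := by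
    funext c
    simp [Matrix.one_apply, Finset.sum_ite_eq', mul_comm]
  rw [hv, det_updateRow_sum]
  simp [Matrix.one_apply, Finset.sum_ite_eq']

lemma deriv_det_one_add {m : ℕ} (C D : Matrix (Fin m) (Fin m) ℂ) :
    deriv (fun ε : ℂ => (C + ε • D).det) 0 = ∑ p : Fin m, (C.updateRow p (D p)).det := by
  classical
  have prodlem : ∀ (ε : ℂ) (S : Finset (Fin m)),
      (∏ i, if i ∈ S then (1:ℂ) else ε) = ε ^ Sᶜ.card := by
    intro ε S
    rw [Finset.prod_ite, Finset.prod_const_one, one_mul, Finset.prod_const]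
    congr 1
    congr 1
    ext x
    simp
  have key : ∀ ε : ℂ, (C + ε • D).det
      = ∑ S : Finset (Fin m), ε ^ Sᶜ.card *
          (Matrix.detRowAlternating (S.piecewise C D : Fin m → Fin m → ℂ)) := by
    intro ε
    have h2 := (Matrix.detRowAlternating (R := ℂ) (n := Fin m)).toMultilinearMap.map_add_univ
      (C : Fin m → Fin m → ℂ) ((ε • D : Matrix (Fin m) (Fin m) ℂ) : Fin m → Fin m → ℂ)
    refine Eq.trans h2 ?_
    refine Finset.sum_congr rfl fun S _ => ?_
    have h2 : (S.piecewise (C : Fin m → Fin m → ℂ) (ε • D : Matrix (Fin m) (Fin m) ℂ))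
        = fun i => (if i ∈ S then (1:ℂ) else ε) • (S.piecewise C D : Fin m → Fin m → ℂ) i := by
      funext i
      by_cases hi : i ∈ S
      · simp [Finset.piecewise, hi]
      · funext j
        simp [Finset.piecewise, hi]
    have h3 := (Matrix.detRowAlternating (R := ℂ) (n := Fin m)).toMultilinearMap.map_smul_univ
      (fun i => if i ∈ S then (1:ℂ) else ε) (S.piecewise C D : Fin m → Fin m → ℂ)
    rw [h2]
    exact h3.trans (by rw [prodlem, smul_eq_mul]; rfl)
  set c : Finset (Fin m) → ℂ :=
    fun S => Matrix.detRowAlternating (S.piecewise C D : Fin m → Fin m → ℂ) with hc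
  have hfe : (fun ε : ℂ => (C + ε • D).det)
      = fun ε => ∑ S : Finset (Fin m), ε ^ Sᶜ.card * c S := funext key
  rw [hfe, deriv_fun_sum (fun S _ => ((differentiableAt_pow _).mul_const _))]
  have hterm : ∀ S : Finset (Fin m),
      deriv (fun ε : ℂ => ε ^ Sᶜ.card * c S) 0 = if Sᶜ.card = 1 then c S else 0 := by
    intro S
    rw [deriv_mul_const (differentiableAt_pow _), deriv_pow_field]
    rcases hS : Sᶜ.card with _ | j
    · simp
    · rcases j with _ | j <;> simp
  rw [Finset.sum_congr rfl fun S _ => hterm S]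
  rw [← Finset.sum_filter]
  have himg : Finset.univ.filter (fun S : Finset (Fin m) => Sᶜ.card = 1)
      = Finset.univ.image (fun p : Fin m => ({p}ᶜ : Finset (Fin m))) := by
    ext S
    simp only [Finset.mem_filter, Finset.mem_image, Finset.mem_univ, true_and]
    constructor
    · intro h1
      obtain ⟨p, hp⟩ := Finset.card_eq_one.mp h1
      exact ⟨p, by rw [← hp, compl_compl]⟩
    · rintro ⟨p, rfl⟩
      rw [compl_compl, Finset.card_singleton]
  rw [himg, Finset.sum_image (fun p _ q _ h => by
    simpa using congrArg (fun (X : Finset (Fin m)) => Xᶜ) h)]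
  refine Finset.sum_congr rfl fun p _ => ?_
  have hpw : (({p}ᶜ : Finset (Fin m)).piecewise C D : Fin m → Fin m → ℂ)
      = C.updateRow p (D p) := by
    funext i
    by_cases hi : i = p
    · subst hi
      simp [Finset.piecewise]
    · simp [Finset.piecewise, hi, Matrix.updateRow_ne hi]
  rw [hc]
  simp only [hpw]
  rfl

lemma emb_eq_orderEmbOfFin {n k : ℕ} (s : Finset (Fin n)) (h : s.card = k) :
    emb s h = fun i => s.orderEmbOfFin h i := rfl

lemma emb_strictMono {n k : ℕ} (s : Finset (Fin n)) (h : s.card = k) :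
    StrictMono (emb s h) := (s.orderEmbOfFin h).strictMono

lemma emb_mem {n k : ℕ} (s : Finset (Fin n)) (h : s.card = k) (i : Fin k) :
    emb s h i ∈ s := s.orderEmbOfFin_mem h i

lemma emb_inj {n k : ℕ} (s : Finset (Fin n)) (h : s.card = k) :
    Function.Injective (emb s h) := (emb_strictMono s h).injective

/-- The sum-of-one-row-replacements form of an additive-compound entry. -/
noncomputable def entryF {n : ℕ} (k : ℕ) (A : Matrix (Fin n) (Fin n) ℂ)
    (s t : Finset (Fin n)) (hs : s.card = k) (ht : t.card = k) : ℂ :=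
  ∑ p : Fin k,
    (((1 : Matrix (Fin n) (Fin n) ℂ).submatrix (emb s hs) (emb t ht)).updateRow p
      (fun j => A (emb s hs p) (emb t ht j))).det

lemma addCompound_eq_entryF {n k : ℕ} (A : Matrix (Fin n) (Fin n) ℂ)
    (α β : {s : Finset (Fin n) // s.card = k}) :
    addCompound k A α β = entryF k A α.1 β.1 α.2 β.2 := by
  have h1 : (fun ε : ℂ => mulCompound k (1 + ε • A) α β)
      = fun ε : ℂ => (((1 : Matrix (Fin n) (Fin n) ℂ).submatrix (emb α.1 α.2) (emb β.1 β.2))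
          + ε • (A.submatrix (emb α.1 α.2) (emb β.1 β.2))).det := by
    funext ε
    simp [mulCompound, Matrix.submatrix_add, Matrix.submatrix_smul]
  rw [addCompound, h1, deriv_det_one_add]
  rfl

lemma entryF_eq_zero {n k : ℕ} (A : Matrix (Fin n) (Fin n) ℂ)
    (s t : Finset (Fin n)) (hs : s.card = k) (ht : t.card = k)
    (h2 : 2 ≤ (s \ t).card) : entryF k A s t hs ht = 0 := by
  refine Finset.sum_eq_zero fun p _ => ?_
  obtain ⟨x, hx, y, hy, hxy⟩ := Finset.one_lt_card.mp h2
  rw [Finset.mem_sdiff] at hx hy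
  set ix := (s.orderIsoOfFin hs).symm ⟨x, hx.1⟩ with hix
  set iy := (s.orderIsoOfFin hs).symm ⟨y, hy.1⟩ with hiy
  have hex : emb s hs ix = x := by
    rw [emb, hix, OrderIso.apply_symm_apply]
  have hey : emb s hs iy = y := by
    rw [emb, hiy, OrderIso.apply_symm_apply]
  have hixy : ix ≠ iy := fun h => hxy (by rw [← hex, ← hey, h])
  -- one of ix, iy differs from p
  obtain ⟨i, hip, hint⟩ : ∃ i, i ≠ p ∧ emb s hs i ∉ t := by
    rcases eq_or_ne ix p with h | h
    · exact ⟨iy, fun hh => hixy (h.trans hh.symm), by rw [hey]; exact hy.2⟩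
    · exact ⟨ix, h, by rw [hex]; exact hx.2⟩
  refine Matrix.det_eq_zero_of_row_eq_zero i fun j => ?_
  rw [Matrix.updateRow_ne hip, Matrix.submatrix_apply, Matrix.one_apply_ne]
  exact fun h => hint (h ▸ emb_mem t ht j)

lemma entryF_diag {n k : ℕ} (A : Matrix (Fin n) (Fin n) ℂ)
    (s : Finset (Fin n)) (hs : s.card = k) :
    entryF k A s s hs hs = ∑ x ∈ s, A x x := by
  have hC : (1 : Matrix (Fin n) (Fin n) ℂ).submatrix (emb s hs) (emb s hs) = 1 := by
    ext i j
    simp [Matrix.one_apply, (emb_inj s hs).eq_iff]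
  rw [entryF]
  simp only [hC, det_updateRow_one]
  rw [← Finset.sum_attach s (fun x => A x x)]
  refine Finset.sum_nbij' (fun p => ⟨emb s hs p, emb_mem s hs p⟩)
    (fun x => (s.orderIsoOfFin hs).symm x) ?_ ?_ ?_ ?_ ?_ <;>
    simp [emb, ← Finset.coe_orderIsoOfFin_apply, Subtype.ext_iff]

lemma entryF_off {n m : ℕ} (A : Matrix (Fin n) (Fin n) ℂ)
    (s t : Finset (Fin n)) (hs : s.card = m + 1) (ht : t.card = m + 1)
    (a b : Fin n) (ha : a ∈ s) (hb : b ∈ t) (hab : a ≠ b)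
    (hst : s.erase a = t.erase b) :
    entryF (m+1) A s t hs ht
      = (-1 : ℂ) ^ ((((s.orderIsoOfFin hs).symm ⟨a, ha⟩ : Fin (m+1)) : ℕ)
          + (((t.orderIsoOfFin ht).symm ⟨b, hb⟩ : Fin (m+1)) : ℕ)) * A a b := by
  classical
  have hat : a ∉ t := by
    intro h
    have : a ∈ t.erase b := Finset.mem_erase.mpr ⟨hab, h⟩
    rw [← hst] at this
    exact (Finset.mem_erase.mp this).1 rfl
  set p₀ : Fin (m+1) := (s.orderIsoOfFin hs).symm ⟨a, ha⟩ with hp₀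
  set q₀ : Fin (m+1) := (t.orderIsoOfFin ht).symm ⟨b, hb⟩ with hq₀
  have hep : emb s hs p₀ = a := by rw [emb, hp₀, OrderIso.apply_symm_apply]
  have heq : emb t ht q₀ = b := by rw [emb, hq₀, OrderIso.apply_symm_apply]
  set S : Finset (Fin n) := s.erase a with hSdef
  have hS : S.card = m := by
    rw [hSdef, Finset.card_erase_of_mem ha, hs]
    rfl
  have hkey_s : ∀ j : Fin m, emb s hs (p₀.succAbove j) = emb S hS j := by
    have hmono : StrictMono (fun j : Fin m => emb s hs (p₀.succAbove j)) :=
      (emb_strictMono s hs).comp (Fin.strictMono_succAbove p₀)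
    have hmem : ∀ j, emb s hs (p₀.succAbove j) ∈ S := by
      intro j
      refine Finset.mem_erase.mpr ⟨?_, emb_mem s hs _⟩
      rw [← hep]
      exact fun h => Fin.succAbove_ne p₀ j (emb_inj s hs h)
    have := Finset.orderEmbOfFin_unique hS hmem hmono
    intro j
    rw [emb_eq_orderEmbOfFin S hS]
    exact congrFun this j
  have hkey_t : ∀ j : Fin m, emb t ht (q₀.succAbove j) = emb S hS j := by
    have hmono : StrictMono (fun j : Fin m => emb t ht (q₀.succAbove j)) :=
      (emb_strictMono t ht).comp (Fin.strictMono_succAbove q₀)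
    have hmem : ∀ j, emb t ht (q₀.succAbove j) ∈ S := by
      intro j
      rw [hst]
      refine Finset.mem_erase.mpr ⟨?_, emb_mem t ht _⟩
      rw [← heq]
      exact fun h => Fin.succAbove_ne q₀ j (emb_inj t ht h)
    have := Finset.orderEmbOfFin_unique hS hmem hmono
    intro j
    rw [emb_eq_orderEmbOfFin S hS]
    exact congrFun this j
  have hkey : ∀ j : Fin m, emb s hs (p₀.succAbove j) = emb t ht (q₀.succAbove j) := by
    intro j; rw [hkey_s j, hkey_t j]
  rw [entryF, Finset.sum_eq_single p₀]
  rotate_left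
  · intro p _ hp
    refine Matrix.det_eq_zero_of_row_eq_zero p₀ fun j => ?_
    rw [Matrix.updateRow_ne (Ne.symm hp), Matrix.submatrix_apply, Matrix.one_apply_ne]
    rw [hep]
    exact fun h => hat (h ▸ emb_mem t ht j)
  · intro h
    exact absurd (Finset.mem_univ p₀) h
  set M := (((1 : Matrix (Fin n) (Fin n) ℂ).submatrix (emb s hs) (emb t ht)).updateRow p₀
      (fun j => A (emb s hs p₀) (emb t ht j))) with hM
  set τ : Equiv.Perm (Fin (m+1)) := p₀.cycleRange⁻¹ * q₀.cycleRange with hτ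
  have hτq : τ q₀ = p₀ := by
    rw [hτ]
    simp only [Equiv.Perm.mul_apply, Fin.cycleRange_self]
    rw [Equiv.Perm.inv_eq_iff_eq, Fin.cycleRange_self]
  have hτs : ∀ j : Fin m, τ (q₀.succAbove j) = p₀.succAbove j := by
    intro j
    rw [hτ]
    simp only [Equiv.Perm.mul_apply, Fin.cycleRange_succAbove]
    rw [Equiv.Perm.inv_eq_iff_eq, Fin.cycleRange_succAbove]
  have hMeq : M.submatrix τ id
      = (1 : Matrix (Fin (m+1)) (Fin (m+1)) ℂ).updateRow q₀ (fun j => A a (emb t ht j)) := by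
    ext i j
    by_cases hi : i = q₀
    · subst hi
      rw [Matrix.submatrix_apply, hτq, hM, id_eq, Matrix.updateRow_self, Matrix.updateRow_self,
        hep]
    · obtain ⟨l, rfl⟩ := Fin.exists_succAbove_eq hi
      rw [Matrix.submatrix_apply, hτs, id_eq, hM,
        Matrix.updateRow_ne (Fin.succAbove_ne p₀ l),
        Matrix.updateRow_ne (Fin.succAbove_ne q₀ l),
        Matrix.submatrix_apply, hkey]
      by_cases hj : q₀.succAbove l = j
      · rw [hj, Matrix.one_apply_eq, Matrix.one_apply_eq]
      · rw [Matrix.one_apply_ne (fun h => hj (emb_inj t ht h)), Matrix.one_apply_ne hj]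
  have hperm := Matrix.det_permute τ M
  rw [hMeq, det_updateRow_one, heq] at hperm
  have hsign : ((Equiv.Perm.sign τ : ℤ) : ℂ) = (-1 : ℂ) ^ ((p₀ : ℕ) + (q₀ : ℕ)) := by
    rw [hτ, _root_.map_mul, map_inv, Fin.sign_cycleRange, Fin.sign_cycleRange]
    push_cast
    rw [pow_add]
    congr 1
    simp
  rw [hsign] at hperm
  have hne : ((-1 : ℂ) ^ ((p₀ : ℕ) + (q₀ : ℕ))) * ((-1 : ℂ) ^ ((p₀ : ℕ) + (q₀ : ℕ))) = 1 := by
    rw [← pow_add, Even.neg_one_pow ⟨(p₀ : ℕ) + (q₀ : ℕ), by ring⟩]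
  calc M.det = (((-1 : ℂ) ^ ((p₀ : ℕ) + (q₀ : ℕ))) * ((-1 : ℂ) ^ ((p₀ : ℕ) + (q₀ : ℕ)))) * M.det := by
        rw [hne, one_mul]
    _ = (-1 : ℂ) ^ ((p₀ : ℕ) + (q₀ : ℕ)) * A a b := by
        rw [mul_assoc, hperm]

/-- The index of `a` in the sorted enumeration of `s` equals the number of
elements of `s` below `a`. -/
lemma orderIso_symm_coe {n k : ℕ} (s : Finset (Fin n)) (hs : s.card = k)
    (a : Fin n) (ha : a ∈ s) :
    (((s.orderIsoOfFin hs).symm ⟨a, ha⟩ : Fin k) : ℕ)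
      = (s.filter (· < a)).card := by
  classical
  set q := (s.orderIsoOfFin hs).symm ⟨a, ha⟩ with hq
  have hea : emb s hs q = a := by rw [emb, hq, OrderIso.apply_symm_apply]
  have himg : s.filter (· < a)
      = (Finset.univ.filter (· < q)).image (emb s hs) := by
    ext x
    simp only [Finset.mem_filter, Finset.mem_image, Finset.mem_univ, true_and]
    constructor
    · rintro ⟨hxs, hxa⟩
      set i := (s.orderIsoOfFin hs).symm ⟨x, hxs⟩ with hi
      have hex : emb s hs i = x := by rw [emb, hi, OrderIso.apply_symm_apply]
      refine ⟨i, ?_, hex⟩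
      rw [← (emb_strictMono s hs).lt_iff_lt, hex, hea]
      exact hxa
    · rintro ⟨i, hiq, rfl⟩
      exact ⟨emb_mem s hs i, by rw [← hea]; exact (emb_strictMono s hs) hiq⟩
  rw [himg, Finset.card_image_of_injective _ (emb_inj s hs)]
  have : Finset.univ.filter (· < q) = Finset.Iio q := by
    ext i; simp
  rw [this, Fin.card_Iio]

lemma entryF_off' {n : ℕ} (k : ℕ) (hk : 1 ≤ k) (A : Matrix (Fin n) (Fin n) ℂ)
    (s t : Finset (Fin n)) (hs : s.card = k) (ht : t.card = k)
    (a b : Fin n) (ha : a ∈ s) (hb : b ∈ t) (hab : a ≠ b)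
    (hst : s.erase a = t.erase b) :
    entryF k A s t hs ht
      = (-1 : ℂ) ^ ((s.filter (· < a)).card + (t.filter (· < b)).card) * A a b := by
  obtain ⟨m, rfl⟩ : ∃ m, k = m + 1 := ⟨k - 1, by omega⟩
  rw [entryF_off A s t hs ht a b ha hb hab hst,
    orderIso_symm_coe s hs a ha, orderIso_symm_coe t ht b hb]

lemma filter_lt_compl_card {n : ℕ} (s : Finset (Fin n)) (b : Fin n) :
    ((sᶜ).filter (· < b)).card + (s.filter (· < b)).card = (b : ℕ) := by
  classical
  have hdis : Disjoint ((sᶜ).filter (· < b)) (s.filter (· < b)) :=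
    Finset.disjoint_filter_filter disjoint_compl_left
  rw [← Finset.card_union_of_disjoint hdis, ← Finset.filter_union]
  rw [show (sᶜ ∪ s : Finset (Fin n)) = Finset.univ by rw [Finset.union_comm]; exact Finset.union_compl s]
  have : Finset.univ.filter (· < b) = Finset.Iio b := by ext i; simp
  rw [this, Fin.card_Iio]

lemma filter_lt_self_erase {n : ℕ} (s : Finset (Fin n)) (a : Fin n) :
    (s.filter (· < a)).card = ((s.erase a).filter (· < a)).card := by
  rw [Finset.filter_erase, Finset.erase_eq_of_notMem]
  simp

lemma filter_lt_insert_lt {n : ℕ} (s : Finset (Fin n)) (a b : Fin n) (ha : a ∈ s)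
    (hab : a < b) :
    (s.filter (· < b)).card = ((s.erase a).filter (· < b)).card + 1 := by
  classical
  conv_lhs => rw [← Finset.insert_erase ha]
  rw [Finset.filter_insert, if_pos hab,
    Finset.card_insert_of_notMem (fun h => (Finset.mem_erase.mp (Finset.mem_filter.mp h).1).1 rfl)]

lemma filter_lt_insert_not_lt {n : ℕ} (s : Finset (Fin n)) (a b : Fin n) (ha : a ∈ s)
    (hab : ¬ a < b) :
    (s.filter (· < b)).card = ((s.erase a).filter (· < b)).card := by
  classical
  conv_lhs => rw [← Finset.insert_erase ha]
  rw [Finset.filter_insert, if_neg hab]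

lemma sum_succ_erase {n : ℕ} (s : Finset (Fin n)) (a : Fin n) (ha : a ∈ s) :
    ∑ i ∈ s, ((i : ℕ) + 1) = (∑ i ∈ s.erase a, ((i : ℕ) + 1)) + ((a : ℕ) + 1) := by
  conv_lhs => rw [← Finset.insert_erase ha]
  rw [Finset.sum_insert (Finset.notMem_erase a s), add_comm]

lemma neg_one_pow_sum_eq_zero (x : ℂ) (e1 e2 : ℕ) (h : Odd (e1 + e2)) :
    (-1 : ℂ) ^ e1 * x + (-1) ^ e2 * x = 0 := by
  rcases Nat.even_or_odd e1 with h1 | h1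
  · have h2 : Odd e2 := by
      rcases h with ⟨c, hc⟩; rcases h1 with ⟨d, hd⟩
      exact ⟨c - d, by omega⟩
    rw [h1.neg_one_pow, h2.neg_one_pow]; ring
  · have h2 : Even e2 := by
      rcases h with ⟨c, hc⟩; rcases h1 with ⟨d, hd⟩
      exact ⟨c - d, by omega⟩
    rw [h1.neg_one_pow, h2.neg_one_pow]; ring

/-- duality of additive compounds:
`(A^{[k]})ᵀ + Uᵀ A^{[n-k]} U = tr(A) · I`. -/
theorem addCompound_duality {n k : ℕ} (hk1 : 1 ≤ k) (hk : k ≤ n - 1)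
    (A : Matrix (Fin n) (Fin n) ℂ) :
    (addCompound k A)ᵀ + (Umat ℂ n k)ᵀ * addCompound (n - k) A * Umat ℂ n k
      = A.trace • (1 : Matrix {s : Finset (Fin n) // s.card = k}
          {s : Finset (Fin n) // s.card = k} ℂ) := by
  classical
  have hn : 2 ≤ n := by omega
  have hnk1 : 1 ≤ n - k := by omega
  have hcard : ∀ u : Finset (Fin n), u.card = k → (uᶜ).card = n - k := fun u hu => by
    rw [Finset.card_compl, hu, Fintype.card_fin]
  ext ⟨s, hs⟩ ⟨t, ht⟩
  set sc : {u : Finset (Fin n) // u.card = n - k} := ⟨sᶜ, hcard s hs⟩ with hsc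
  set tc : {u : Finset (Fin n) // u.card = n - k} := ⟨tᶜ, hcard t ht⟩ with htc
  have hprod : ((Umat ℂ n k)ᵀ * addCompound (n - k) A * Umat ℂ n k) ⟨s, hs⟩ ⟨t, ht⟩
      = (-1 : ℂ) ^ (∑ i ∈ s, ((i : ℕ) + 1)) * addCompound (n - k) A sc tc
          * (-1 : ℂ) ^ (∑ i ∈ t, ((i : ℕ) + 1)) := by
    rw [Matrix.mul_apply]
    rw [Finset.sum_eq_single tc]
    rotate_left
    · intro b' _ hb'
      have : Umat ℂ n k b' ⟨t, ht⟩ = 0 := by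
        rw [Umat, if_neg]
        intro h
        exact hb' (Subtype.ext h)
      rw [this, mul_zero]
    · intro h; exact absurd (Finset.mem_univ tc) h
    have hU2 : Umat ℂ n k tc ⟨t, ht⟩ = (-1 : ℂ) ^ (∑ i ∈ t, ((i : ℕ) + 1)) := by
      rw [Umat, if_pos rfl]
    rw [hU2, Matrix.mul_apply]
    rw [Finset.sum_eq_single sc]
    rotate_left
    · intro a' _ ha'
      have : (Umat ℂ n k)ᵀ ⟨s, hs⟩ a' = 0 := by
        rw [Matrix.transpose_apply, Umat, if_neg]
        intro h
        exact ha' (Subtype.ext h)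
      rw [this, zero_mul]
    · intro h; exact absurd (Finset.mem_univ sc) h
    rw [Matrix.transpose_apply, Umat, if_pos rfl]
  rw [Matrix.add_apply, Matrix.transpose_apply, hprod, Matrix.smul_apply, Matrix.one_apply,
    addCompound_eq_entryF, addCompound_eq_entryF]
  by_cases hst : s = t
  · subst hst
    rw [if_pos rfl, smul_eq_mul, mul_one]
    have h1 : entryF k A s s hs hs = ∑ x ∈ s, A x x := entryF_diag A s hs
    have h2 : entryF (n - k) A sᶜ sᶜ (hcard s hs) (hcard s hs) = ∑ x ∈ sᶜ, A x x :=
      entryF_diag A sᶜ (hcard s hs)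
    show entryF k A s s hs hs
        + (-1 : ℂ) ^ (∑ i ∈ s, ((i : ℕ) + 1)) * entryF (n - k) A sᶜ sᶜ _ _
          * (-1 : ℂ) ^ (∑ i ∈ s, ((i : ℕ) + 1)) = A.trace
    rw [h1, h2]
    have hsq : (-1 : ℂ) ^ (∑ i ∈ s, ((i : ℕ) + 1)) * (∑ x ∈ sᶜ, A x x)
        * (-1 : ℂ) ^ (∑ i ∈ s, ((i : ℕ) + 1)) = ∑ x ∈ sᶜ, A x x := by
      have : ((-1 : ℂ) ^ (∑ i ∈ s, ((i : ℕ) + 1))) * ((-1 : ℂ) ^ (∑ i ∈ s, ((i : ℕ) + 1))) = 1 := by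
        rw [← pow_add]
        exact Even.neg_one_pow ⟨_, rfl⟩
      calc (-1 : ℂ) ^ (∑ i ∈ s, ((i : ℕ) + 1)) * (∑ x ∈ sᶜ, A x x)
          * (-1 : ℂ) ^ (∑ i ∈ s, ((i : ℕ) + 1))
          = ((-1 : ℂ) ^ (∑ i ∈ s, ((i : ℕ) + 1)) * (-1 : ℂ) ^ (∑ i ∈ s, ((i : ℕ) + 1)))
            * (∑ x ∈ sᶜ, A x x) := by ring
        _ = ∑ x ∈ sᶜ, A x x := by rw [this, one_mul]
    rw [hsq, Finset.sum_add_sum_compl, Matrix.trace]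
    rfl
  · rw [if_neg (fun h => hst (congrArg Subtype.val h)), smul_eq_mul, mul_zero]
    show entryF k A t s ht hs
        + (-1 : ℂ) ^ (∑ i ∈ s, ((i : ℕ) + 1))
          * entryF (n - k) A sᶜ tᶜ (hcard s hs) (hcard t ht)
          * (-1 : ℂ) ^ (∑ i ∈ t, ((i : ℕ) + 1)) = 0
    have hcc : (s \ t).card = (t \ s).card := Finset.card_sdiff_comm (hs.trans ht.symm)
    have h1le : 1 ≤ (t \ s).card := by
      rcases Nat.eq_zero_or_pos (t \ s).card with h0 | h0
      · exfalso
        have hsub : t ⊆ s := by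
          intro x hx
          by_contra hxs
          exact absurd (Finset.card_eq_zero.mp h0 ▸ Finset.mem_sdiff.mpr ⟨hx, hxs⟩)
            (Finset.notMem_empty x)
        exact hst ((Finset.eq_of_subset_of_card_le hsub (hs.trans ht.symm).le).symm)
      · exact h0
    rcases Nat.lt_or_ge (t \ s).card 2 with hc1 | hc2
    · -- exactly one element differs
      have hone : (t \ s).card = 1 := by omega
      obtain ⟨b, hb⟩ := Finset.card_eq_one.mp hone
      obtain ⟨a, ha⟩ := Finset.card_eq_one.mp (hcc.trans hone)
      have hbt : b ∈ t := (Finset.mem_sdiff.mp (hb ▸ Finset.mem_singleton_self b)).1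
      have hbs : b ∉ s := (Finset.mem_sdiff.mp (hb ▸ Finset.mem_singleton_self b)).2
      have has : a ∈ s := (Finset.mem_sdiff.mp (ha ▸ Finset.mem_singleton_self a)).1
      have hat : a ∉ t := (Finset.mem_sdiff.mp (ha ▸ Finset.mem_singleton_self a)).2
      have hab : a ≠ b := fun h => hbs (h ▸ has)
      have herase : t.erase b = s.erase a := by
        refine (Finset.eq_of_subset_of_card_le ?_ ?_).symm
        · intro x hx
          obtain ⟨hxa, hxs⟩ := Finset.mem_erase.mp hx
          have hxt : x ∈ t := by
            by_contra hxt
            exact hxa (Finset.mem_singleton.mp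
              (by rw [← ha]; exact Finset.mem_sdiff.mpr ⟨hxs, hxt⟩))
          exact Finset.mem_erase.mpr ⟨fun h => hbs (by rw [← h]; exact hxs), hxt⟩
        · rw [Finset.card_erase_of_mem has, Finset.card_erase_of_mem hbt, hs, ht]
      have hbsc : b ∈ sᶜ := Finset.mem_compl.mpr hbs
      have hatc : a ∈ tᶜ := Finset.mem_compl.mpr hat
      have hins : insert b s = insert a t := by
        calc insert b s = insert b (insert a (s.erase a)) := by rw [Finset.insert_erase has]
          _ = insert a (insert b (s.erase a)) := Finset.insert_comm b a _
          _ = insert a (insert b (t.erase b)) := by rw [herase]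
          _ = insert a t := by rw [Finset.insert_erase hbt]
      have heraseC : sᶜ.erase b = tᶜ.erase a := by
        rw [← Finset.compl_insert, ← Finset.compl_insert, hins]
      have hv1 : entryF k A t s ht hs
          = (-1 : ℂ) ^ ((t.filter (· < b)).card + (s.filter (· < a)).card) * A b a :=
        entryF_off' k hk1 A t s ht hs b a hbt has (Ne.symm hab) herase
      have hv2 : entryF (n - k) A sᶜ tᶜ (hcard s hs) (hcard t ht)
          = (-1 : ℂ) ^ (((sᶜ).filter (· < b)).card + ((tᶜ).filter (· < a)).card) * A b a :=
        entryF_off' (n - k) hnk1 A sᶜ tᶜ (hcard s hs) (hcard t ht) b a hbsc hatc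
          (Ne.symm hab) heraseC
      rw [hv1, hv2]
      have hcomb : (-1 : ℂ) ^ (∑ i ∈ s, ((i : ℕ) + 1))
            * ((-1 : ℂ) ^ (((sᶜ).filter (· < b)).card + ((tᶜ).filter (· < a)).card) * A b a)
            * (-1 : ℂ) ^ (∑ i ∈ t, ((i : ℕ) + 1))
          = (-1 : ℂ) ^ ((∑ i ∈ s, ((i : ℕ) + 1))
              + ((((sᶜ).filter (· < b)).card + (((tᶜ).filter (· < a)).card))
              + (∑ i ∈ t, ((i : ℕ) + 1)))) * A b a := by
        rw [pow_add, pow_add]; ring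
      rw [hcomb]
      refine neg_one_pow_sum_eq_zero (A b a) _ _ ?_
      rw [Nat.odd_iff]
      have E1 := filter_lt_compl_card s b
      have E2 := filter_lt_compl_card t a
      have E3 := filter_lt_self_erase s a
      have E4 := filter_lt_self_erase t b
      have E7 := sum_succ_erase s a has
      have E8 := sum_succ_erase t b hbt
      rw [herase] at E4 E8
      rcases lt_or_gt_of_ne hab with hlt | hgt
      · have E5 := filter_lt_insert_lt s a b has hlt
        have E6 := filter_lt_insert_not_lt t b a hbt (not_lt.mpr hlt.le)
        rw [herase] at E6
        omega
      · have E5 := filter_lt_insert_lt t b a hbt hgt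
        have E6 := filter_lt_insert_not_lt s a b has (not_lt.mpr hgt.le)
        rw [herase] at E5
        omega
    · -- at least two elements differ
      have hz1 : entryF k A t s ht hs = 0 :=
        entryF_eq_zero A t s ht hs hc2
      have hz2 : entryF (n - k) A sᶜ tᶜ (hcard s hs) (hcard t ht) = 0 := by
        refine entryF_eq_zero A sᶜ tᶜ (hcard s hs) (hcard t ht) ?_
        rwa [compl_sdiff_compl]
      rw [hz1, hz2]
      ring
end

section
/- If for A ∈ ℝ^{n×n} there exist an invertible T, k ∈ {1,…,n}, and q ∈ {1,2,∞} such that tr(A) + (n−k) μ_{q,T}(−A) < 0, then every sum of k eigenvalues of A (i.e., ∑_{i∈α} λ_i for any α ∈ Q(k,n)) has negative real part. -/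
open Matrix Finset
open scoped ENNReal

set_option maxHeartbeats 1000000

open Polynomial in

lemma eval_charpoly' {R : Type*} [CommRing R] {m : Type*} [Fintype m] [DecidableEq m]
    (M : Matrix m m R) (t : R) : M.charpoly.eval t = (t • (1 : Matrix m m R) - M).det := by
  rw [Matrix.charpoly, ← Polynomial.coe_evalRingHom, RingHom.map_det]
  congr 1
  ext i j
  by_cases h : i = j <;>
    simp [Matrix.charmatrix_apply, h, Matrix.one_apply, Matrix.smul_apply, Matrix.diagonal_apply,
      Matrix.sub_apply]

lemma exists_eigenvector {m : Type*} [Fintype m] [DecidableEq m]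
    (M : Matrix m m ℂ) (μ : ℂ) (h : M.charpoly.eval μ = 0) :
    ∃ v : m → ℂ, v ≠ 0 ∧ M.mulVec v = μ • v := by
  rw [eval_charpoly'] at h
  obtain ⟨v, hv, hMv⟩ := Matrix.exists_mulVec_eq_zero_iff.mpr h
  refine ⟨v, hv, ?_⟩
  rw [Matrix.sub_mulVec, Matrix.smul_mulVec, Matrix.one_mulVec, sub_eq_zero] at hMv
  exact hMv.symm

open scoped ENNReal


section
variable (q : ℝ≥0∞) [Fact (1 ≤ q)] {ι : Type*} [Fintype ι] [DecidableEq ι]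

noncomputable def clmOf (A : Matrix ι ι ℝ) :
    PiLp q (fun _ : ι => ℝ) →L[ℝ] PiLp q (fun _ : ι => ℝ) :=
  LinearMap.toContinuousLinearMap
      (Matrix.toLin (PiLp.basisFun q ℝ ι) (PiLp.basisFun q ℝ ι) A)

lemma pOpNorm_eq (hq1 : 1 ≤ q) (A : Matrix ι ι ℝ) : pOpNorm q hq1 A = ‖clmOf q A‖ := rfl

lemma clmOf_apply (A : Matrix ι ι ℝ) (x : PiLp q fun _ : ι => ℝ) :
    clmOf q A x = (WithLp.equiv q _).symm (A.mulVec ((WithLp.equiv q _) x)) := by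
  simp only [clmOf, LinearMap.coe_toContinuousLinearMap']
  rw [Matrix.toLin_apply]
  have hrepr : ⇑((PiLp.basisFun q ℝ ι).repr x) = fun i => x i :=
    funext fun i => PiLp.basisFun_repr q ℝ ι x i
  rw [hrepr]
  ext i
  simp only [PiLp.basisFun_apply]
  rw [WithLp.ofLp_sum, Finset.sum_apply]
  simp [PiLp.smul_apply, PiLp.toLp_apply, WithLp.equiv_symm_apply, Pi.single_apply, Finset.sum_ite_eq', mul_comm]

end

section
variable (q : ℝ≥0∞) [Fact (1 ≤ q)] {ι : Type*} [Fintype ι] [DecidableEq ι]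

lemma mulVec_norm_le (hq1 : 1 ≤ q) (A : Matrix ι ι ℝ) (x : ι → ℝ) :
    ‖(WithLp.equiv q (ι → ℝ)).symm (A.mulVec x)‖ ≤
      pOpNorm q hq1 A * ‖(WithLp.equiv q (ι → ℝ)).symm x‖ := by
  have h := (clmOf q A).le_opNorm ((WithLp.equiv q (ι → ℝ)).symm x)
  rwa [clmOf_apply, Equiv.apply_symm_apply, ← pOpNorm_eq] at h

lemma le_pOpNorm_of (hq1 : 1 ≤ q) (A : Matrix ι ι ℝ) (x : ι → ℝ)
    (hx : ‖(WithLp.equiv q (ι → ℝ)).symm x‖ ≤ 1) :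
    ‖(WithLp.equiv q (ι → ℝ)).symm (A.mulVec x)‖ ≤ pOpNorm q hq1 A := by
  calc ‖(WithLp.equiv q (ι → ℝ)).symm (A.mulVec x)‖
      ≤ pOpNorm q hq1 A * ‖(WithLp.equiv q (ι → ℝ)).symm x‖ := mulVec_norm_le q hq1 A x
    _ ≤ pOpNorm q hq1 A * 1 := by
        have : (0:ℝ) ≤ pOpNorm q hq1 A := by rw [pOpNorm_eq]; exact norm_nonneg _
        nlinarith
    _ = pOpNorm q hq1 A := mul_one _

lemma pOpNorm_one [Nonempty ι] (hq1 : 1 ≤ q) :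
    pOpNorm q hq1 (1 : Matrix ι ι ℝ) = 1 := by
  have h1 : clmOf q (1 : Matrix ι ι ℝ) = ContinuousLinearMap.id ℝ (PiLp q fun _ : ι => ℝ) := by
    ext x
    rw [clmOf_apply]
    simp [Matrix.one_mulVec]
  haveI : Nontrivial (PiLp q fun _ : ι => ℝ) := by
    refine ⟨0, (WithLp.equiv q (ι → ℝ)).symm (Pi.single (Classical.arbitrary ι) 1), fun h => ?_⟩
    have := congrArg (fun z => (WithLp.equiv q (ι → ℝ)) z) h
    simp only [Equiv.apply_symm_apply, map_zero] at this
    have := congrFun this (Classical.arbitrary ι)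
    simp at this
  rw [pOpNorm_eq, h1, ContinuousLinearMap.norm_id]

lemma clmOf_add_smul (A B : Matrix ι ι ℝ) (h : ℝ) :
    clmOf q (A + h • B) = clmOf q A + h • clmOf q B := by
  unfold clmOf
  rw [map_add, _root_.map_smul, map_add, _root_.map_smul]

end


lemma le_logNorm_of_forall (q : ℝ≥0∞) (hq1 : 1 ≤ q) {ι : Type*} [Fintype ι] [DecidableEq ι]
    [Nonempty ι] (M : Matrix ι ι ℝ) (c : ℝ)
    (hc : ∀ h : ℝ, 0 < h → c ≤ (pOpNorm q hq1 (1 + h • M) - 1) / h) :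
    c ≤ logNorm q hq1 M := by
  haveI : Fact (1 ≤ q) := ⟨hq1⟩
  set g : ℝ → ℝ := fun h => (pOpNorm q hq1 (1 + h • M) - 1) / h with hgdef
  have hφ : ∀ h : ℝ, pOpNorm q hq1 (1 + h • M) = ‖clmOf q (1 : Matrix ι ι ℝ) + h • clmOf q M‖ := by
    intro h
    rw [pOpNorm_eq, clmOf_add_smul]
  have mono : MonotoneOn g (Set.Ioi (0:ℝ)) := by
    intro a ha b hb hab
    simp only [Set.mem_Ioi] at ha hb
    have hb0 : b ≠ 0 := ne_of_gt hb
    set t : ℝ := a / b with htdef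
    have ht0 : 0 < t := div_pos ha hb
    have htb : t * b = a := div_mul_cancel₀ a hb0
    have ht1 : t ≤ 1 := by rw [htdef]; exact div_le_one_of_le₀ hab (le_of_lt hb)
    have hcomb : clmOf q (1 : Matrix ι ι ℝ) + a • clmOf q M =
        (1 - t) • clmOf q (1 : Matrix ι ι ℝ) +
          t • (clmOf q (1 : Matrix ι ι ℝ) + b • clmOf q M) := by
      have : a = t * b := htb.symm
      rw [this]
      module
    have hone : ‖clmOf q (1 : Matrix ι ι ℝ)‖ = 1 := by
      rw [← pOpNorm_eq q hq1, pOpNorm_one]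
    have hna : pOpNorm q hq1 (1 + a • M) ≤ (1 - t) + t * pOpNorm q hq1 (1 + b • M) := by
      rw [hφ a, hφ b, hcomb]
      calc ‖(1 - t) • clmOf q (1 : Matrix ι ι ℝ) +
            t • (clmOf q (1 : Matrix ι ι ℝ) + b • clmOf q M)‖
          ≤ ‖(1 - t) • clmOf q (1 : Matrix ι ι ℝ)‖ +
            ‖t • (clmOf q (1 : Matrix ι ι ℝ) + b • clmOf q M)‖ := norm_add_le _ _
        _ ≤ ‖(1 - t : ℝ)‖ * ‖clmOf q (1 : Matrix ι ι ℝ)‖ +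
            ‖(t : ℝ)‖ * ‖clmOf q (1 : Matrix ι ι ℝ) + b • clmOf q M‖ :=
            add_le_add (ContinuousLinearMap.opNorm_smul_le _ _) (ContinuousLinearMap.opNorm_smul_le _ _)
        _ = (1 - t) + t * ‖clmOf q (1 : Matrix ι ι ℝ) + b • clmOf q M‖ := by
            rw [hone, Real.norm_eq_abs, Real.norm_eq_abs, abs_of_nonneg (by linarith : (0:ℝ) ≤ 1 - t),
              abs_of_nonneg (le_of_lt ht0), mul_one]
    show g a ≤ g b
    rw [hgdef]
    simp only
    rw [div_le_div_iff₀ ha hb]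
    have h2 : pOpNorm q hq1 (1 + a • M) - 1 ≤ t * (pOpNorm q hq1 (1 + b • M) - 1) := by
      nlinarith [hna]
    have h3 := mul_le_mul_of_nonneg_right h2 (le_of_lt hb)
    have h4 : t * (pOpNorm q hq1 (1 + b • M) - 1) * b = (pOpNorm q hq1 (1 + b • M) - 1) * a := by
      rw [← htb]; ring
    linarith
  have bdd : BddBelow (g '' Set.Ioi (0:ℝ)) := by
    refine ⟨c, fun y hy => ?_⟩
    obtain ⟨h, hh, rfl⟩ := hy
    exact hc h hh
  have tend := mono.tendsto_nhdsGT bdd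
  have hlim : logNorm q hq1 M = sInf (g '' Set.Ioi (0:ℝ)) := tend.limUnder_eq
  rw [hlim]
  refine le_csInf ⟨g 1, ⟨1, by norm_num, rfl⟩⟩ ?_
  rintro b ⟨h, hh, rfl⟩
  exact hc h hh

section
variable {ι : Type*} [Fintype ι] [DecidableEq ι]

lemma norm_L1 (f : ι → ℝ) :
    ‖(WithLp.equiv 1 (ι → ℝ)).symm f‖ = ∑ i, |f i| := by
  haveI : Fact ((1:ℝ≥0∞) ≤ 1) := ⟨le_refl _⟩
  rw [PiLp.norm_eq_sum (by norm_num : 0 < (1:ℝ≥0∞).toReal)]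
  simp [PiLp.toLp_apply, WithLp.equiv_symm_apply, Real.norm_eq_abs]

lemma norm_Linf (f : ι → ℝ) :
    ‖(WithLp.equiv ⊤ (ι → ℝ)).symm f‖ = ⨆ i, |f i| := by
  rw [PiLp.norm_eq_ciSup]
  simp [PiLp.toLp_apply, WithLp.equiv_symm_apply, Real.norm_eq_abs]

lemma norm_L2_sq (f : ι → ℝ) :
    ‖(WithLp.equiv 2 (ι → ℝ)).symm f‖ ^ 2 = ∑ i, (f i) ^ 2 := by
  haveI : Fact ((1:ℝ≥0∞) ≤ 2) := ⟨by norm_num⟩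
  rw [EuclideanSpace.norm_eq]
  rw [Real.sq_sqrt (by positivity)]
  simp [PiLp.toLp_apply, WithLp.equiv_symm_apply, Real.norm_eq_abs, sq_abs]

lemma spec_bound (q : ℝ≥0∞) (hq : q = 1 ∨ q = 2 ∨ q = ⊤) (hq1 : 1 ≤ q) [Nonempty ι]
    (N : Matrix ι ι ℝ) (μ : ℂ) (v : ι → ℂ) (hv : v ≠ 0)
    (hNv : (N.map (algebraMap ℝ ℂ)).mulVec v = μ • v) :
    ‖μ‖ ≤ pOpNorm q hq1 N := by
  have happ : ∀ j, ∑ k, (N j k : ℂ) * v k = μ * v j := by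
    intro j
    have := congrFun hNv j
    simpa [Matrix.mulVec, dotProduct, Matrix.map_apply] using this
  obtain ⟨k0, hk0⟩ : ∃ k0, v k0 ≠ 0 := Function.ne_iff.mp hv
  rcases hq with h1 | h2 | hinf
  · -- q = 1
    subst h1
    haveI : Fact ((1:ℝ≥0∞) ≤ 1) := ⟨le_refl _⟩
    set S := ∑ k, ‖v k‖ with hS
    have hSpos : 0 < S := by
      refine Finset.sum_pos' (fun i _ => norm_nonneg _) ⟨k0, Finset.mem_univ _, ?_⟩
      exact norm_pos_iff.mpr hk0
    have hcol : ∀ k, (∑ j, |N j k|) ≤ pOpNorm 1 hq1 N := by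
      intro k
      have hx : ‖(WithLp.equiv 1 (ι → ℝ)).symm (Pi.single k (1:ℝ))‖ ≤ 1 := by
        rw [norm_L1]
        have habs : ∀ x : ι, |(Pi.single k (1:ℝ) : ι → ℝ) x| = if x = k then (1:ℝ) else 0 := by
          intro x; rw [Pi.single_apply]; split <;> simp
        simp [habs]
      have := le_pOpNorm_of 1 hq1 N (Pi.single k 1) hx
      rw [Matrix.mulVec_single, norm_L1] at this
      simpa using this
    have main : ‖μ‖ * S ≤ S * pOpNorm 1 hq1 N := by
      calc ‖μ‖ * S = ∑ j, ‖μ * v j‖ := by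
            rw [Finset.mul_sum]; congr 1; ext j; rw [norm_mul]
        _ = ∑ j, ‖∑ k, (N j k : ℂ) * v k‖ := by
            congr 1; ext j; rw [happ j]
        _ ≤ ∑ j, ∑ k, |N j k| * ‖v k‖ := by
            refine Finset.sum_le_sum fun j _ => ?_
            calc ‖∑ k, (N j k : ℂ) * v k‖
                ≤ ∑ k, ‖(N j k : ℂ) * v k‖ := by
                  exact norm_sum_le _ _
              _ = ∑ k, |N j k| * ‖v k‖ := by
                  congr 1; ext k; rw [norm_mul, Complex.norm_real, Real.norm_eq_abs]
        _ = ∑ k, ‖v k‖ * (∑ j, |N j k|) := by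
            rw [Finset.sum_comm]; congr 1; ext k; rw [Finset.mul_sum]
            congr 1; ext j; ring
        _ ≤ ∑ k, ‖v k‖ * pOpNorm 1 hq1 N := by
            refine Finset.sum_le_sum fun k _ => ?_
            exact mul_le_mul_of_nonneg_left (hcol k) (norm_nonneg _)
        _ = S * pOpNorm 1 hq1 N := by rw [← Finset.sum_mul]
    have := (mul_le_mul_iff_left₀ hSpos).mp (by linarith [main] : ‖μ‖ * S ≤ pOpNorm 1 hq1 N * S)
    exact this
  · -- q = 2
    subst h2
    haveI : Fact ((1:ℝ≥0∞) ≤ 2) := ⟨by norm_num⟩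
    set x : ι → ℝ := fun i => (v i).re with hxdef
    set y : ι → ℝ := fun i => (v i).im with hydef
    have hre : ∀ j, (N.mulVec x) j = (μ * v j).re := by
      intro j
      rw [← happ j]
      simp [Matrix.mulVec, dotProduct, Complex.re_sum, Complex.mul_re, hxdef]
    have him : ∀ j, (N.mulVec y) j = (μ * v j).im := by
      intro j
      rw [← happ j]
      simp [Matrix.mulVec, dotProduct, Complex.im_sum, Complex.mul_im, hydef]
    set p := pOpNorm 2 hq1 N with hpdef
    have hp0 : 0 ≤ p := by rw [hpdef, pOpNorm_eq]; exact norm_nonneg _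
    have hX := mulVec_norm_le 2 hq1 N x
    have hY := mulVec_norm_le 2 hq1 N y
    have hX2 : ∑ j, ((N.mulVec x) j)^2 ≤ p^2 * ∑ i, (x i)^2 := by
      rw [← norm_L2_sq, ← norm_L2_sq]
      calc ‖(WithLp.equiv 2 (ι → ℝ)).symm (N.mulVec x)‖^2
          ≤ (p * ‖(WithLp.equiv 2 (ι → ℝ)).symm x‖)^2 := by
            apply pow_le_pow_left₀ (norm_nonneg _) hX
        _ = p^2 * ‖(WithLp.equiv 2 (ι → ℝ)).symm x‖^2 := by ring
    have hY2 : ∑ j, ((N.mulVec y) j)^2 ≤ p^2 * ∑ i, (y i)^2 := by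
      rw [← norm_L2_sq, ← norm_L2_sq]
      calc ‖(WithLp.equiv 2 (ι → ℝ)).symm (N.mulVec y)‖^2
          ≤ (p * ‖(WithLp.equiv 2 (ι → ℝ)).symm y‖)^2 := by
            apply pow_le_pow_left₀ (norm_nonneg _) hY
        _ = p^2 * ‖(WithLp.equiv 2 (ι → ℝ)).symm y‖^2 := by ring
    set s := ∑ i, ‖v i‖ ^ 2 with hsdef
    have hs_split : s = (∑ i, (x i)^2) + ∑ i, (y i)^2 := by
      rw [hsdef, ← Finset.sum_add_distrib]
      congr 1; ext i
      rw [Complex.sq_norm, Complex.normSq_apply]; ring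
    have hspos : 0 < s := by
      refine Finset.sum_pos' (fun i _ => by positivity) ⟨k0, Finset.mem_univ _, ?_⟩
      have := norm_pos_iff.mpr hk0
      positivity
    have hmain : ‖μ‖ ^ 2 * s ≤ p^2 * s := by
      have lhs_eq : ‖μ‖ ^ 2 * s = ∑ j, ((N.mulVec x) j)^2 + ∑ j, ((N.mulVec y) j)^2 := by
        rw [← Finset.sum_add_distrib, hsdef, Finset.mul_sum]
        congr 1; ext j
        rw [hre j, him j, ← mul_pow, ← norm_mul, Complex.sq_norm,
          Complex.normSq_apply]
        ring
      rw [lhs_eq, hs_split, mul_add]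
      exact add_le_add hX2 hY2
    have h2 : ‖μ‖ ^ 2 ≤ p ^ 2 := le_of_mul_le_mul_right (by linarith) hspos
    calc ‖μ‖ = Real.sqrt (‖μ‖ ^ 2) := (Real.sqrt_sq (norm_nonneg _)).symm
      _ ≤ Real.sqrt (p^2) := Real.sqrt_le_sqrt h2
      _ = p := Real.sqrt_sq hp0
  · -- q = ⊤
    subst hinf
    haveI : Fact ((1:ℝ≥0∞) ≤ ⊤) := ⟨le_top⟩
    obtain ⟨j, hj⟩ := Finite.exists_max (fun i => ‖v i‖)
    have hvj : 0 < ‖v j‖ := lt_of_lt_of_le (norm_pos_iff.mpr hk0) (hj k0)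
    -- row sum bound by operator norm
    have hrow : (∑ k, |N j k|) ≤ pOpNorm ⊤ hq1 N := by
      set w : ι → ℝ := fun k => if N j k < 0 then (-1:ℝ) else 1 with hwdef
      have hw1 : ∀ k, |w k| = 1 := by
        intro k; rw [hwdef]; by_cases h : N j k < 0 <;> simp [h]
      have hwn : ‖(WithLp.equiv ⊤ (ι → ℝ)).symm w‖ ≤ 1 := by
        rw [norm_Linf]
        exact ciSup_le fun i => le_of_eq (hw1 i)
      have := le_pOpNorm_of ⊤ hq1 N w hwn
      rw [norm_Linf] at this
      refine le_trans ?_ this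
      have hNw : (N.mulVec w) j = ∑ k, |N j k| := by
        simp only [Matrix.mulVec, dotProduct]
        congr 1; ext k
        rw [hwdef]
        by_cases h : N j k < 0
        · simp [h, abs_of_neg h]
        · simp [h, abs_of_nonneg (not_lt.mp h)]
      calc (∑ k, |N j k|) = |(N.mulVec w) j| := by
            rw [hNw]; exact (abs_of_nonneg (by positivity)).symm
        _ ≤ ⨆ i, |(N.mulVec w) i| := le_ciSup (f := fun i => |(N.mulVec w) i|) (Finite.bddAbove_range _) j
    have main : ‖μ‖ * ‖v j‖ ≤ pOpNorm ⊤ hq1 N * ‖v j‖ := by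
      calc ‖μ‖ * ‖v j‖ = ‖μ * v j‖ := (norm_mul _ _).symm
        _ = ‖∑ k, (N j k : ℂ) * v k‖ := by rw [happ j]
        _ ≤ ∑ k, ‖(N j k : ℂ) * v k‖ := norm_sum_le _ _
        _ = ∑ k, |N j k| * ‖v k‖ := by
            congr 1; ext k; rw [norm_mul, Complex.norm_real, Real.norm_eq_abs]
        _ ≤ ∑ k, |N j k| * ‖v j‖ := by
            refine Finset.sum_le_sum fun k _ => ?_
            exact mul_le_mul_of_nonneg_left (hj k) (abs_nonneg _)
        _ = (∑ k, |N j k|) * ‖v j‖ := by rw [← Finset.sum_mul]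
        _ ≤ pOpNorm ⊤ hq1 N * ‖v j‖ :=
            mul_le_mul_of_nonneg_right hrow (norm_nonneg _)
    exact le_of_mul_le_mul_right main hvj

end

lemma re_le_logNorm (q : ℝ≥0∞) (hq : q = 1 ∨ q = 2 ∨ q = ⊤) (hq1 : 1 ≤ q)
    {ι : Type*} [Fintype ι] [DecidableEq ι] [Nonempty ι]
    (M : Matrix ι ι ℝ) (μ : ℂ) (v : ι → ℂ) (hv : v ≠ 0)
    (hMv : (M.map (algebraMap ℝ ℂ)).mulVec v = μ • v) :
    μ.re ≤ logNorm q hq1 M := by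
  refine le_logNorm_of_forall q hq1 M μ.re ?_
  intro h hh
  have hev : ((1 + h • M).map (algebraMap ℝ ℂ)).mulVec v = (1 + (h:ℂ) * μ) • v := by
    have hmap : (1 + h • M).map (algebraMap ℝ ℂ) =
        1 + (h:ℂ) • M.map (algebraMap ℝ ℂ) := by
      ext i j
      by_cases hij : i = j <;>
        simp [hij, Matrix.map_apply, Matrix.one_apply, Matrix.add_apply, Matrix.smul_apply]
    rw [hmap, Matrix.add_mulVec, Matrix.one_mulVec, Matrix.smul_mulVec, hMv]
    funext i
    simp [Pi.add_apply, Pi.smul_apply, smul_eq_mul]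
    ring
  have habs := spec_bound q hq hq1 (1 + h • M) (1 + (h:ℂ) * μ) v hv hev
  have h1 : 1 + h * μ.re ≤ ‖1 + (h:ℂ) * μ‖ := by
    have hre := Complex.re_le_norm (1 + (h:ℂ) * μ)
    simpa using hre
  rw [le_div_iff₀ hh]
  nlinarith [habs, h1]

lemma multiset_sum_neg_re (t : Multiset ℂ) :
    (t.map (fun l => (-l).re)).sum = -((t.sum).re) := by
  induction t using Multiset.induction_on with
  | empty => simp
  | cons a t ih =>
      rw [Multiset.map_cons, Multiset.sum_cons, ih, Multiset.sum_cons, Complex.add_re, Complex.neg_re]; ring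


/-- if `tr A + (n-k) μ_{q,T}(-A) < 0` for some invertible `T`, `k`, and
`q ∈ {1,2,∞}`, then every sum of `k` eigenvalues of `A` (with multiplicity) has negative
real part. -/
theorem eigenvalue_sums_negative {n k : ℕ} (hk1 : 1 ≤ k) (hkn : k ≤ n) (q : ℝ≥0∞)
    (hq : q = 1 ∨ q = 2 ∨ q = ⊤) (hq1 : 1 ≤ q)
    (A T : Matrix (Fin n) (Fin n) ℝ) (hT : IsUnit T)
    (hneg : A.trace + ((n : ℝ) - (k : ℝ)) * logNorm q hq1 (T * (-A) * T⁻¹) < 0) :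
    ∀ mus : Multiset ℂ, mus ≤ (A.charpoly.map (algebraMap ℝ ℂ)).roots →
      Multiset.card mus = k → (mus.sum).re < 0 := by
  intro mus hsub hcard
  have hn : 0 < n := lt_of_lt_of_le hk1 hkn
  haveI : Nonempty (Fin n) := Fin.pos_iff_nonempty.mp hn
  set M := T * (-A) * T⁻¹ with hM
  set R := (A.charpoly.map (algebraMap ℝ ℂ)).roots with hR
  have hmonic := A.charpoly_monic
  have hdeg : (A.charpoly.map (algebraMap ℝ ℂ)).natDegree = n := by
    rw [hmonic.natDegree_map, Matrix.charpoly_natDegree_eq_dim, Fintype.card_fin]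
  have hcardR : Multiset.card R = n := by
    have h5 := Polynomial.splits_iff_card_roots.mp
      (IsAlgClosed.splits (A.charpoly.map (algebraMap ℝ ℂ)))
    rw [hdeg] at h5
    exact h5
  have htr : ((A.trace : ℝ) : ℂ) = R.sum := by
    have h2 := Matrix.trace_eq_sum_roots_charpoly (A := A.map (algebraMap ℝ ℂ))
    rw [Matrix.charpoly_map] at h2
    rw [hR, ← h2]
    simp [Matrix.trace, Matrix.diag, Matrix.map_apply]
  set rest := R - mus with hrest
  have hsplitm : mus + rest = R := add_tsub_cancel_of_le hsub
  have hcrest : Multiset.card rest = n - k := by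
    rw [hrest, Multiset.card_sub hsub, hcardR, hcard]
  have hsum : mus.sum + rest.sum = ((A.trace : ℝ) : ℂ) := by
    rw [htr, ← hsplitm, Multiset.sum_add]
  have hbound : ∀ lam ∈ rest, (-lam).re ≤ logNorm q hq1 M := by
    intro lam hlam
    have hlamR : lam ∈ R := Multiset.mem_of_le tsub_le_self hlam
    have hne : (A.charpoly.map (algebraMap ℝ ℂ)) ≠ 0 := (hmonic.map _).ne_zero
    have hroot0 : (A.charpoly.map (algebraMap ℝ ℂ)).eval lam = 0 :=
      (Polynomial.mem_roots hne).mp hlamR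
    have hroot : (A.map (algebraMap ℝ ℂ)).charpoly.eval lam = 0 := by
      rw [Matrix.charpoly_map]; exact hroot0
    obtain ⟨v, hv, hAv⟩ := exists_eigenvector _ lam hroot
    set f := algebraMap ℝ ℂ with hf
    have hTinv : T⁻¹ * T = 1 := Matrix.nonsing_inv_mul T ((Matrix.isUnit_iff_isUnit_det T).mp hT)
    have hTinv' : (T⁻¹.map f) * (T.map f) = 1 := by
      rw [← Matrix.map_mul, hTinv, Matrix.map_one f (map_zero f) (map_one f)]
    set w := (T.map f).mulVec v with hw
    have hw0 : w ≠ 0 := by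
      intro h0
      have h3 : (T⁻¹.map f).mulVec w = ((T⁻¹.map f) * (T.map f)).mulVec v := by
        rw [hw, Matrix.mulVec_mulVec]
      rw [hTinv', Matrix.one_mulVec, h0, Matrix.mulVec_zero] at h3
      exact hv h3.symm
    have hnegmap : (-A).map f = -(A.map f) := by
      ext i j; simp [Matrix.map_apply]
    have hMw : (M.map f).mulVec w = (-lam) • w := by
      have hMmap : M.map f = (T.map f) * ((-A).map f) * (T⁻¹.map f) := by
        rw [hM, Matrix.map_mul, Matrix.map_mul]
      rw [hw, hMmap, Matrix.mulVec_mulVec, mul_assoc, mul_assoc, hTinv', mul_one,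
        ← Matrix.mulVec_mulVec, hnegmap, Matrix.neg_mulVec, hAv]
      rw [← Matrix.mulVec_smul]
      congr 1
      funext i
      simp
    exact re_le_logNorm q hq hq1 M (-lam) w hw0 hMw
  have hre_sum : (mus.sum).re = A.trace - (rest.sum).re := by
    have h4 := congrArg Complex.re hsum
    simp only [Complex.add_re, Complex.ofReal_re] at h4
    linarith
  have hle := Multiset.sum_le_card_nsmul (rest.map (fun l => (-l).re)) (logNorm q hq1 M)
    (by intro x hx
        obtain ⟨lam, hlam, rfl⟩ := Multiset.mem_map.mp hx
        exact hbound lam hlam)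
  rw [Multiset.card_map, hcrest, multiset_sum_neg_re, nsmul_eq_mul] at hle
  have hcast : ((n - k : ℕ) : ℝ) = (n:ℝ) - k := by
    rw [Nat.cast_sub hkn]
  rw [hcast] at hle
  linarith
end
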